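/- arXiv:1902.05055 — 8 statements merged into one kernel-verified Lean document; each statement's English description precedes it below -/
import Mathlib

section
/- Let r ≥ 1 be an integer, let G be a finite simple graph with independence number α(G), and let c be an edge-colouring of G with colours 1,…,r. Then the vertex set of G can be covered by at most r·α(G) monochromatic components of (G,c). -/
/-- A set of vertices `T` covers a hypergraph with edge family `E` if it meets every edge. -/
def IsCover {V : Type*} (E : Set (Set V)) (T : Set V) : Prop :=
  ∀ e ∈ E, (e ∩ T).Nonempty

/-- The cover number of a hypergraph: minimum size of a cover. -/
noncomputable def coverNumber {V : Type*} (E : Set (Set V)) : ℕ :=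
  sInf {n | ∃ T : Set V, T.ncard = n ∧ IsCover E T}

/-- The `(k,ℓ)`-cover property: any at most `k` edges have a cover of size at most `ℓ`. -/
def CoverProperty {V : Type*} (E : Set (Set V)) (k ℓ : ℕ) : Prop :=
  ∀ S ⊆ E, S.ncard ≤ k → ∃ T : Set V, T.ncard ≤ ℓ ∧ IsCover S T

/-- `E` is an `r`-partite `r`-graph w.r.t. the partition `part`. -/
def IsPartite {V : Type*} (r : ℕ) (part : V → Fin r) (E : Set (Set V)) : Prop :=
  ∀ e ∈ E, ∀ i : Fin r, (e ∩ part ⁻¹' {i}).ncard = 1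

/-- A transversal cover: a cover containing exactly one vertex from each part. -/
def IsTransversalCover {V : Type*} (r : ℕ) (part : V → Fin r) (E : Set (Set V))
    (T : Set V) : Prop :=
  IsCover E T ∧ ∀ i : Fin r, (T ∩ part ⁻¹' {i}).ncard = 1

/-- The `(r,k)`-cover property: any at most `k` edges have a transversal cover. -/
def PartiteCoverProperty {V : Type*} (r : ℕ) (part : V → Fin r) (E : Set (Set V))
    (k : ℕ) : Prop :=
  ∀ S ⊆ E, S.ncard ≤ k → ∃ T : Set V, IsTransversalCover r part S T

/-- The spanning subgraph of `G` consisting of the edges of colour `i`. -/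
def colorSubgraph {V : Type*} (G : SimpleGraph V) {r : ℕ} (c : Sym2 V → Fin r)
    (i : Fin r) : SimpleGraph V where
  Adj u v := G.Adj u v ∧ c s(u, v) = i
  symm := ⟨fun u v h => ⟨h.1.symm, by rw [Sym2.eq_swap]; exact h.2⟩⟩
  loopless := ⟨fun v h => G.loopless.irrefl v h.1⟩

/-- The independence number of a simple graph. -/
noncomputable def alphaNum {V : Type*} (G : SimpleGraph V) : ℕ :=
  sSup {n | ∃ S : Finset V, S.card = n ∧ ∀ u ∈ S, ∀ v ∈ S, u ≠ v → ¬ G.Adj u v}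

/-- any `r`-edge-coloured finite graph `G` can be covered by at most
`r · α(G)` monochromatic components (a component is specified by its colour and
a representative vertex). -/
theorem stmt0 {V : Type*} [Fintype V] (r : ℕ) (hr : 1 ≤ r)
    (G : SimpleGraph V) (c : Sym2 V → Fin r) :
    ∃ S : Finset (Fin r × V), S.card ≤ r * alphaNum G ∧
      ∀ v : V, ∃ p ∈ S, (colorSubgraph G c p.1).Reachable p.2 v := by
  classical
  set A : Set ℕ := {n | ∃ S : Finset V, S.card = n ∧ ∀ u ∈ S, ∀ v ∈ S, u ≠ v → ¬ G.Adj u v}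
  have hA0 : (0 : ℕ) ∈ A := ⟨∅, rfl, by simp⟩
  have hbdd : BddAbove A := by
    refine ⟨Fintype.card V, fun n hn => ?_⟩
    obtain ⟨S, hS, _⟩ := hn
    exact hS ▸ S.card_le_univ.trans_eq (Finset.card_univ)
  have hmem : alphaNum G ∈ A := Nat.sSup_mem ⟨0, hA0⟩ hbdd
  obtain ⟨I, hIcard, hIind⟩ := hmem
  -- maximality: every vertex not in I has a neighbour in I
  have hmax : ∀ v : V, v ∉ I → ∃ u ∈ I, G.Adj u v := by
    intro v hv
    by_contra h
    push_neg at h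
    have hins : (insert v I).card ∈ A := by
      refine ⟨insert v I, rfl, ?_⟩
      intro a ha b hb hab
      rcases Finset.mem_insert.mp ha with ha' | ha' <;>
        rcases Finset.mem_insert.mp hb with hb' | hb'
      · exact absurd (ha'.trans hb'.symm) hab
      · subst ha'; exact fun hadj => h b hb' hadj.symm
      · subst hb'; exact h a ha'
      · exact hIind a ha' b hb' hab
    have hle : (insert v I).card ≤ alphaNum G := le_csSup hbdd hins
    rw [Finset.card_insert_of_notMem hv, hIcard] at hle
    omega
  refine ⟨Finset.univ ×ˢ I, ?_, ?_⟩
  · rw [Finset.card_product, Finset.card_univ, Fintype.card_fin, hIcard]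
  · intro v
    by_cases hv : v ∈ I
    · exact ⟨(⟨0, hr⟩, v), Finset.mem_product.mpr ⟨Finset.mem_univ _, hv⟩,
        SimpleGraph.Reachable.refl v⟩
    · obtain ⟨u, hu, hadj⟩ := hmax v hv
      exact ⟨(c s(u, v), u), Finset.mem_product.mpr ⟨Finset.mem_univ _, hu⟩,
        SimpleGraph.Adj.reachable ⟨hadj, rfl⟩⟩
end

section
/- Let r ≥ 2 and t ≥ 0 be integers and let H be a critical r-uniform hypergraph with cover number τ(H) = t+1. Then H has at most binomial(r+t, t) edges. -/
open Finset Equiv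


/-- The permutation of `Fin n` that, within the set `W` (of size `r+b`), moves the
positions indexed by `P` to the first `r` slots of `W` and the rest to the last `b` slots. -/
noncomputable def sortPerm (n r b : ℕ) (W : Finset (Fin n)) (P : Finset (Fin (r + b))) :
    Equiv.Perm (Fin n) :=
  if h : W.card = r + b ∧ P.card = r then
    letI u : Fin (r + b) ≃o ↥W := W.orderIsoOfFin h.1
    letI eP : Fin r ≃o ↥P := P.orderIsoOfFin h.2
    letI eQ : Fin b ≃o ↥(Pᶜ) := Finset.orderIsoOfFin _ (by
      rw [Finset.card_compl, h.2, Fintype.card_fin]; omega)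
    letI ω : Fin (r + b) ≃ Fin (r + b) :=
      ((Equiv.sumCompl (· ∈ P)).symm.trans
        ((Equiv.sumCongr eP.toEquiv.symm
          ((Equiv.subtypeEquivRight (fun x => (Finset.mem_compl (s := P) (a := x)).symm)).trans
            eQ.toEquiv.symm)).trans finSumFinEquiv))
    Equiv.Perm.extendDomain (u.toEquiv.symm.trans (ω.trans u.toEquiv)) (Equiv.refl _)
  else Equiv.refl _

lemma sortPerm_mem {n r b : ℕ} {W : Finset (Fin n)} {P : Finset (Fin (r + b))} {x : Fin n}
    (hx : x ∈ W) : sortPerm n r b W P x ∈ W := by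
  unfold sortPerm
  split
  · rw [Equiv.Perm.extendDomain_apply_subtype _ _ hx]
    exact Subtype.coe_prop _
  · exact hx

lemma sortPerm_lt {n r b : ℕ} {W : Finset (Fin n)} {P : Finset (Fin (r + b))}
    (hW : W.card = r + b) (hP : P.card = r) {x y : Fin n} (hx : x ∈ W) (hy : y ∈ W)
    (hxP : (W.orderIsoOfFin hW).symm ⟨x, hx⟩ ∈ P)
    (hyP : (W.orderIsoOfFin hW).symm ⟨y, hy⟩ ∉ P) :
    sortPerm n r b W P x < sortPerm n r b W P y := by
  unfold sortPerm
  rw [dif_pos ⟨hW, hP⟩]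
  rw [Equiv.Perm.extendDomain_apply_subtype _ _ hx, Equiv.Perm.extendDomain_apply_subtype _ _ hy]
  simp only [Equiv.refl_symm, Equiv.refl_apply, Equiv.trans_apply]
  generalize_proofs h1 h2
  erw [Equiv.sumCompl_symm_apply_of_pos (p := fun x => x ∈ P) hxP, Equiv.sumCompl_symm_apply_of_neg (p := fun x => x ∈ P) hyP]
  simp only [Equiv.sumCongr_apply, Sum.map_inl, Sum.map_inr, finSumFinEquiv_apply_left,
    finSumFinEquiv_apply_right]
  simp only [RelIso.coe_fn_toEquiv]
  rw [Subtype.coe_lt_coe, OrderIso.lt_iff_lt]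
  simp only [Fin.lt_def, Fin.coe_castAdd, Fin.coe_natAdd]
  exact lt_of_lt_of_le (Fin.is_lt _) (Nat.le_add_right _ _)

example : True := trivial

lemma key_count {V : Type*} [Fintype V] [DecidableEq V] {r b : ℕ} (A B : Finset V)
    (hA : A.card = r) (hB : B.card = b) (hAB : Disjoint A B) :
    (Fintype.card V).factorial ≤ (r + b).choose r *
      Fintype.card {σ : V ≃ Fin (Fintype.card V) // ∀ a ∈ A, ∀ x ∈ B, σ a < σ x} := by
  classical
  set n := Fintype.card V with hn
  set C : Finset V := A ∪ B with hC
  have hCcard : C.card = r + b := by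
    rw [hC, Finset.card_union_of_disjoint hAB, hA, hB]
  have hU : ∀ τ : V ≃ Fin n, (C.image τ).card = r + b := fun τ => by
    rw [Finset.card_image_of_injective _ τ.injective, hCcard]
  have hmemU : ∀ (τ : V ≃ Fin n) (v : V), v ∈ C → τ v ∈ C.image τ :=
    fun τ v hv => Finset.mem_image_of_mem _ hv
  set pat : (V ≃ Fin n) → Finset (Fin (r + b)) := fun τ =>
    A.attach.image (fun a => ((C.image τ).orderIsoOfFin (hU τ)).symm
      ⟨τ a.1, hmemU τ a.1 (Finset.mem_union_left _ a.2)⟩) with hpatdef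
  have hpat : ∀ τ, (pat τ).card = r := by
    intro τ
    rw [hpatdef]
    rw [Finset.card_image_of_injective _ ?_, Finset.card_attach, hA]
    intro a a' h
    exact Subtype.ext (τ.injective (Subtype.mk_eq_mk.mp
      (((C.image τ).orderIsoOfFin (hU τ)).symm.injective h)))
  have hpatmem : ∀ (τ : V ≃ Fin n) (a : V) (ha : a ∈ A),
      ((C.image τ).orderIsoOfFin (hU τ)).symm
        ⟨τ a, hmemU τ a (Finset.mem_union_left _ ha)⟩ ∈ pat τ := by
    intro τ a ha
    rw [hpatdef]
    exact Finset.mem_image_of_mem _ (Finset.mem_attach _ ⟨a, ha⟩)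
  have hpatnotmem : ∀ (τ : V ≃ Fin n) (x : V) (hx : x ∈ B),
      ((C.image τ).orderIsoOfFin (hU τ)).symm
        ⟨τ x, hmemU τ x (Finset.mem_union_right _ hx)⟩ ∉ pat τ := by
    intro τ x hx hmem
    rw [hpatdef] at hmem
    obtain ⟨a, -, ha⟩ := Finset.mem_image.mp hmem
    have : τ a.1 = τ x := Subtype.mk_eq_mk.mp
      (((C.image τ).orderIsoOfFin (hU τ)).symm.injective ha)
    have : a.1 = x := τ.injective this
    exact (Finset.disjoint_left.mp hAB (this ▸ a.2)) hx
  have hsorted : ∀ τ : V ≃ Fin n, ∀ a ∈ A, ∀ x ∈ B,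
      (τ.trans (sortPerm n r b (C.image τ) (pat τ))) a
        < (τ.trans (sortPerm n r b (C.image τ) (pat τ))) x := by
    intro τ a ha x hx
    exact sortPerm_lt (hU τ) (hpat τ)
      (hmemU τ a (Finset.mem_union_left _ ha)) (hmemU τ x (Finset.mem_union_right _ hx))
      (hpatmem τ a ha) (hpatnotmem τ x hx)
  have himg : ∀ τ : V ≃ Fin n,
      C.image (τ.trans (sortPerm n r b (C.image τ) (pat τ))) = C.image τ := by
    intro τ
    apply Finset.eq_of_subset_of_card_le
    · intro z hz
      obtain ⟨c, hc, rfl⟩ := Finset.mem_image.mp hz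
      exact sortPerm_mem (hmemU τ c hc)
    · rw [hU, Finset.card_image_of_injective _ (τ.trans _).injective, hCcard]
  set Φ : (V ≃ Fin n) → {s : Finset (Fin (r + b)) // s.card = r} ×
      {σ : V ≃ Fin n // ∀ a ∈ A, ∀ x ∈ B, σ a < σ x} :=
    fun τ => (⟨pat τ, hpat τ⟩,
      ⟨τ.trans (sortPerm n r b (C.image τ) (pat τ)), hsorted τ⟩) with hΦ
  have hinj : Function.Injective Φ := by
    intro τ₁ τ₂ h
    have h1 : pat τ₁ = pat τ₂ := congrArg (fun p => (Prod.fst p).1) h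
    have h2 : τ₁.trans (sortPerm n r b (C.image τ₁) (pat τ₁))
        = τ₂.trans (sortPerm n r b (C.image τ₂) (pat τ₂)) :=
      congrArg (fun p => (Prod.snd p).1) h
    have hU12 : C.image τ₁ = C.image τ₂ := by
      rw [← himg τ₁, ← himg τ₂, h2]
    have hsp : sortPerm n r b (C.image τ₁) (pat τ₁)
        = sortPerm n r b (C.image τ₂) (pat τ₂) := by rw [hU12, h1]
    have h3 := congrArg
      (fun σ : V ≃ Fin n => σ.trans (sortPerm n r b (C.image τ₂) (pat τ₂)).symm) h2
    simpa [hsp, Equiv.trans_assoc] using h3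
  calc n.factorial = Fintype.card (V ≃ Fin n) :=
        (Fintype.card_equiv (Fintype.equivFin V)).symm
    _ ≤ Fintype.card ({s : Finset (Fin (r + b)) // s.card = r} ×
        {σ : V ≃ Fin n // ∀ a ∈ A, ∀ x ∈ B, σ a < σ x}) :=
        Fintype.card_le_of_injective Φ hinj
    _ = (r + b).choose r *
        Fintype.card {σ : V ≃ Fin n // ∀ a ∈ A, ∀ x ∈ B, σ a < σ x} := by
        rw [Fintype.card_prod, Fintype.card_finset_len, Fintype.card_fin]


/-- a critical `r`-uniform hypergraph with cover number `t+1`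
has at most `C(r+t, t)` edges. -/
theorem stmt1 (r t : ℕ) (hr : 2 ≤ r) {V : Type*} [Fintype V]
    (E : Set (Set V)) (hunif : ∀ e ∈ E, e.ncard = r)
    (hcrit : ∀ E' ⊂ E, coverNumber E' < coverNumber E)
    (hcov : coverNumber E = t + 1) :
    E.ncard ≤ (r + t).choose t := by
  classical
  have hcovle : ∀ T : Set V, IsCover E T → t + 1 ≤ T.ncard := by
    intro T hT
    rw [← hcov]
    exact Nat.sInf_le ⟨T, rfl, hT⟩
  have hex : ∀ e : Set V, ∃ T : Set V, e ∈ E →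
      T.ncard ≤ t ∧ e ∩ T = ∅ ∧ ∀ f ∈ E, f ≠ e → (f ∩ T).Nonempty := by
    intro e
    by_cases he : e ∈ E
    · have hss : E \ {e} ⊂ E := Set.sdiff_singleton_ssubset.mpr he
      have hlt : coverNumber (E \ {e}) < t + 1 := hcov ▸ hcrit _ hss
      have hne : {m | ∃ T : Set V, T.ncard = m ∧ IsCover (E \ {e}) T}.Nonempty := by
        refine ⟨(Set.univ : Set V).ncard, Set.univ, rfl, ?_⟩
        intro f hf
        rw [Set.inter_univ]
        apply Set.nonempty_of_ncard_ne_zero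
        rw [hunif f hf.1]; omega
      have hmem := Nat.sInf_mem hne
      simp only [Set.mem_setOf_eq] at hmem
      obtain ⟨T, hTcard, hTcov⟩ := hmem
      have hTle : T.ncard ≤ t := by
        have : T.ncard < t + 1 := by rw [hTcard]; exact hlt
        omega
      refine ⟨T, fun _ => ⟨hTle, ?_, ?_⟩⟩
      · by_contra hne'
        rw [← Ne, ← Set.nonempty_iff_ne_empty] at hne'
        have : IsCover E T := by
          intro f hf
          rcases eq_or_ne f e with rfl | h
          · exact hne'
          · exact hTcov f ⟨hf, by simp [h]⟩
        have := hcovle T this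
        omega
      · intro f hf hfe
        exact hTcov f ⟨hf, by simp [hfe]⟩
    · exact ⟨∅, fun h => absurd h he⟩
  choose Tf hT using hex
  set n := Fintype.card V with hn
  set F : Finset (Set V) := (Set.toFinite E).toFinset with hF
  set A : Set V → Finset V := fun e => (Set.toFinite e).toFinset with hA
  set B : Set V → Finset V := fun e => (Set.toFinite (Tf e)).toFinset with hB
  set S : Set V → Finset (V ≃ Fin n) := fun e =>
    Finset.univ.filter (fun σ => ∀ a ∈ A e, ∀ x ∈ B e, σ a < σ x) with hS
  have hmemF : ∀ e, e ∈ F ↔ e ∈ E := fun e => Set.Finite.mem_toFinset _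
  have hmemA : ∀ e v, v ∈ A e ↔ v ∈ e := fun e v => Set.Finite.mem_toFinset _
  have hmemB : ∀ e v, v ∈ B e ↔ v ∈ Tf e := fun e v => Set.Finite.mem_toFinset _
  have hperE : ∀ e ∈ F, n.factorial ≤ (r + t).choose r * (S e).card := by
    intro e heF
    have he : e ∈ E := (hmemF e).mp heF
    obtain ⟨hTle, hTdisj, -⟩ := hT e he
    have hAcard : (A e).card = r := by
      rw [hA]; rw [← Set.ncard_eq_toFinset_card]; exact hunif e he
    have hBcard : (B e).card ≤ t := by
      rw [hB]; rw [← Set.ncard_eq_toFinset_card]; exact hTle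
    have hdisj : Disjoint (A e) (B e) := by
      rw [Finset.disjoint_left]
      intro a ha hb
      have : a ∈ e ∩ Tf e := ⟨(hmemA e a).mp ha, (hmemB e a).mp hb⟩
      rw [hTdisj] at this
      exact this
    have hkey := key_count (A e) (B e) hAcard rfl hdisj
    have hcard : Fintype.card {σ : V ≃ Fin n // ∀ a ∈ A e, ∀ x ∈ B e, σ a < σ x}
        = (S e).card := by
      rw [hS]
      exact Fintype.card_subtype _
    rw [hcard] at hkey
    calc n.factorial ≤ (r + (B e).card).choose r * (S e).card := hkey
      _ ≤ (r + t).choose r * (S e).card :=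
        Nat.mul_le_mul_right _ (Nat.choose_le_choose r (by omega))
  have hdisjS : ∀ e ∈ F, ∀ f ∈ F, e ≠ f → Disjoint (S e) (S f) := by
    intro e heF f hfF hef
    have he : e ∈ E := (hmemF e).mp heF
    have hf : f ∈ E := (hmemF f).mp hfF
    obtain ⟨p, hp⟩ := (hT f hf).2.2 e he hef
    obtain ⟨q, hq⟩ := (hT e he).2.2 f hf (Ne.symm hef)
    rw [Finset.disjoint_left]
    intro σ h1 h2
    rw [hS, Finset.mem_filter] at h1 h2
    have l1 : σ p < σ q := h1.2 p ((hmemA e p).mpr hp.1) q ((hmemB e q).mpr hq.2)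
    have l2 : σ q < σ p := h2.2 q ((hmemA f q).mpr hq.1) p ((hmemB f p).mpr hp.2)
    exact absurd (l1.trans l2) (lt_irrefl _)
  have hsum : ∑ e ∈ F, (S e).card ≤ n.factorial := by
    rw [← Finset.card_biUnion hdisjS]
    calc (F.biUnion S).card ≤ Fintype.card (V ≃ Fin n) := Finset.card_le_univ _
      _ = n.factorial := Fintype.card_equiv (Fintype.equivFin V)
  have hmain : F.card * n.factorial ≤ (r + t).choose r * n.factorial := by
    calc F.card * n.factorial = ∑ _e ∈ F, n.factorial := by
          rw [Finset.sum_const, smul_eq_mul]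
      _ ≤ ∑ e ∈ F, (r + t).choose r * (S e).card := Finset.sum_le_sum hperE
      _ = (r + t).choose r * ∑ e ∈ F, (S e).card := by rw [Finset.mul_sum]
      _ ≤ (r + t).choose r * n.factorial := Nat.mul_le_mul_left _ hsum
  have hFle : F.card ≤ (r + t).choose r :=
    Nat.le_of_mul_le_mul_right hmain (Nat.factorial_pos n)
  have hsymm : (r + t).choose r = (r + t).choose t := by
    have h := Nat.choose_symm (Nat.le_add_right r t)
    simpa using h.symm
  rw [Set.ncard_eq_toFinset_card E (Set.toFinite E), ← hsymm]
  exact hFle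
end

section
/- Let r ≥ 2, ℓ ≥ 1 and k be integers with k ≥ binomial(r+ℓ, ℓ). Then every r-uniform hypergraph satisfying the (k,ℓ)-cover property has cover number at most ℓ. -/
section BollobasAux
open Finset

namespace Bol
variable {V : Type*} [Fintype V] [DecidableEq V]

lemma orderEmbOfFin_congr {n m : ℕ} {s t : Finset (Fin n)} (h : s = t) (hs : s.card = m)
    (ht : t.card = m) (i : Fin m) : s.orderEmbOfFin hs i = t.orderEmbOfFin ht i := by
  subst h; rfl

/-- The image of `A ∪ B` under `σ`. -/
def Pt (A B : Finset V) (σ : V ≃ Fin (Fintype.card V)) : Finset (Fin (Fintype.card V)) :=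
  (A ∪ B).image σ

lemma card_Pt (A B : Finset V) (hd : Disjoint A B) (σ : V ≃ Fin (Fintype.card V)) :
    (Pt A B σ).card = A.card + B.card := by
  rw [Pt, card_image_of_injective _ σ.injective, card_union_of_disjoint hd]

noncomputable def ePi (A B : Finset V) (hd : Disjoint A B) (σ : V ≃ Fin (Fintype.card V)) :
    Fin (A.card + B.card) ≃o {x // x ∈ Pt A B σ} :=
  (Pt A B σ).orderIsoOfFin (card_Pt A B hd σ)

noncomputable def eAi (A : Finset V) (σ : V ≃ Fin (Fintype.card V)) :
    Fin A.card ≃o {x // x ∈ A.image σ} :=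
  (A.image σ).orderIsoOfFin (card_image_of_injective _ σ.injective)

lemma mem_B_of_mem_Pt {A B : Finset V} {σ : V ≃ Fin (Fintype.card V)}
    (x : {x // x ∈ Pt A B σ}) (hx : ↑x ∉ A.image σ) : ↑x ∈ B.image σ := by
  have h := x.2
  simp only [Pt, image_union, mem_union] at h
  tauto

noncomputable def gfun (A B : Finset V) (hd : Disjoint A B) (σ : V ≃ Fin (Fintype.card V)) :
    {x // x ∈ Pt A B σ} → {x // x ∈ Pt A B σ} := fun x =>
  if hx : ↑x ∈ A.image σ then ePi A B hd σ (Fin.castAdd B.card ((eAi A σ).symm ⟨x, hx⟩))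
  else ePi A B hd σ (Fin.natAdd A.card ((eAi B σ).symm ⟨x, mem_B_of_mem_Pt x hx⟩))

lemma gfun_inj (A B : Finset V) (hd : Disjoint A B) (σ : V ≃ Fin (Fintype.card V)) :
    Function.Injective (gfun A B hd σ) := by
  intro x y h
  unfold gfun at h
  split_ifs at h with hx hy hy
  · have h2 := (ePi A B hd σ).injective h
    have hv := congrArg Fin.val h2
    simp only [Fin.coe_castAdd] at hv
    have h3 : ((eAi A σ).symm ⟨↑x, hx⟩ : Fin A.card) = (eAi A σ).symm ⟨↑y, hy⟩ := Fin.ext hv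
    have h4 := (eAi A σ).symm.injective h3
    have h5 := Subtype.mk_eq_mk.mp h4
    exact Subtype.ext h5
  · have h2 := (ePi A B hd σ).injective h
    have := congrArg Fin.val h2
    simp only [Fin.coe_castAdd, Fin.coe_natAdd] at this
    have hlt := ((eAi A σ).symm ⟨↑x, hx⟩).isLt
    omega
  · have h2 := (ePi A B hd σ).injective h
    have := congrArg Fin.val h2
    simp only [Fin.coe_castAdd, Fin.coe_natAdd] at this
    have hlt := ((eAi A σ).symm ⟨↑y, hy⟩).isLt
    omega
  · have h2 := (ePi A B hd σ).injective h
    have hv := congrArg Fin.val h2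
    simp only [Fin.coe_natAdd] at hv
    have h3 : ((eAi B σ).symm ⟨↑x, mem_B_of_mem_Pt x hx⟩ : Fin B.card)
        = (eAi B σ).symm ⟨↑y, mem_B_of_mem_Pt y hy⟩ := Fin.ext (by omega)
    have h4 := (eAi B σ).symm.injective h3
    have h5 := Subtype.mk_eq_mk.mp h4
    exact Subtype.ext h5

noncomputable def gperm (A B : Finset V) (hd : Disjoint A B) (σ : V ≃ Fin (Fintype.card V)) :
    Equiv.Perm {x // x ∈ Pt A B σ} :=
  Equiv.ofBijective _ (Finite.injective_iff_bijective.mp (gfun_inj A B hd σ))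

noncomputable def pperm (A B : Finset V) (hd : Disjoint A B) (σ : V ≃ Fin (Fintype.card V)) :
    Equiv.Perm (Fin (Fintype.card V)) :=
  Equiv.Perm.ofSubtype (p := (· ∈ Pt A B σ)) (gperm A B hd σ)

noncomputable def Fσ (A B : Finset V) (hd : Disjoint A B) (σ : V ≃ Fin (Fintype.card V)) :
    V ≃ Fin (Fintype.card V) :=
  σ.trans (pperm A B hd σ)


lemma sigma_mem_Pt {A B : Finset V} (σ : V ≃ Fin (Fintype.card V)) {v : V} (hv : v ∈ A ∪ B) :
    σ v ∈ Pt A B σ := mem_image_of_mem σ hv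

lemma F_apply_mem_A (A B : Finset V) (hd : Disjoint A B) (σ : V ≃ Fin (Fintype.card V))
    {v : V} (hv : v ∈ A) :
    Fσ A B hd σ v = ↑(ePi A B hd σ (Fin.castAdd B.card
      ((eAi A σ).symm ⟨σ v, mem_image_of_mem σ hv⟩))) := by
  have hm : σ v ∈ Pt A B σ := sigma_mem_Pt σ (mem_union_left _ hv)
  have h1 : Fσ A B hd σ v = pperm A B hd σ (σ v) := rfl
  rw [h1, pperm, Equiv.Perm.ofSubtype_apply_of_mem _ hm]
  have h2 : gperm A B hd σ ⟨σ v, hm⟩ = gfun A B hd σ ⟨σ v, hm⟩ := rfl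
  rw [h2, gfun, dif_pos (mem_image_of_mem σ hv)]

lemma F_apply_mem_B (A B : Finset V) (hd : Disjoint A B) (σ : V ≃ Fin (Fintype.card V))
    {v : V} (hv : v ∈ B) (hvA : σ v ∉ A.image σ) :
    Fσ A B hd σ v = ↑(ePi A B hd σ (Fin.natAdd A.card
      ((eAi B σ).symm ⟨σ v, mem_image_of_mem σ hv⟩))) := by
  have hm : σ v ∈ Pt A B σ := sigma_mem_Pt σ (mem_union_right _ hv)
  have h1 : Fσ A B hd σ v = pperm A B hd σ (σ v) := rfl
  rw [h1, pperm, Equiv.Perm.ofSubtype_apply_of_mem _ hm]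
  have h2 : gperm A B hd σ ⟨σ v, hm⟩ = gfun A B hd σ ⟨σ v, hm⟩ := rfl
  rw [h2, gfun, dif_neg hvA]

lemma not_mem_Pt {A B : Finset V} (σ : V ≃ Fin (Fintype.card V)) {v : V} (hv : v ∉ A ∪ B) :
    σ v ∉ Pt A B σ := by
  simp only [Pt, mem_image]
  rintro ⟨u, hu, huv⟩
  exact hv (σ.injective huv ▸ hu)

lemma F_apply_not_mem (A B : Finset V) (hd : Disjoint A B) (σ : V ≃ Fin (Fintype.card V))
    {v : V} (hv : v ∉ A ∪ B) : Fσ A B hd σ v = σ v := by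
  have h1 : Fσ A B hd σ v = pperm A B hd σ (σ v) := rfl
  rw [h1, pperm, Equiv.Perm.ofSubtype_apply_of_not_mem _ (not_mem_Pt σ hv)]

def Good (A B : Finset V) (σ : V ≃ Fin (Fintype.card V)) : Prop :=
  ∀ x ∈ A, ∀ y ∈ B, σ x < σ y

instance (A B : Finset V) : DecidablePred (Good A B) := fun σ => by
  unfold Good; infer_instance

lemma not_mem_image_A {A B : Finset V} (hd : Disjoint A B) (σ : V ≃ Fin (Fintype.card V))
    {v : V} (hv : v ∈ B) : σ v ∉ A.image σ := by
  simp only [mem_image]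
  rintro ⟨u, hu, huv⟩
  exact (disjoint_left.mp hd) (σ.injective huv ▸ hu) hv

lemma good_F (A B : Finset V) (hd : Disjoint A B) (σ : V ≃ Fin (Fintype.card V)) :
    Good A B (Fσ A B hd σ) := by
  intro x hx y hy
  rw [F_apply_mem_A A B hd σ hx, F_apply_mem_B A B hd σ hy (not_mem_image_A hd σ hy)]
  rw [Subtype.coe_lt_coe, OrderIso.lt_iff_lt]
  simp only [Fin.lt_def, Fin.coe_castAdd, Fin.coe_natAdd]
  have := ((eAi A σ).symm ⟨σ x, mem_image_of_mem σ hx⟩).isLt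
  omega

/-- The relative position set. -/
noncomputable def Gs (A B : Finset V) (hd : Disjoint A B) (σ : V ≃ Fin (Fintype.card V)) :
    Finset (Fin (A.card + B.card)) :=
  univ.filter (fun i => ↑(ePi A B hd σ i) ∈ A.image σ)

lemma image_Gs (A B : Finset V) (hd : Disjoint A B) (σ : V ≃ Fin (Fintype.card V)) :
    (Gs A B hd σ).image (fun i => (↑(ePi A B hd σ i) : Fin (Fintype.card V))) = A.image σ := by
  apply Finset.Subset.antisymm
  · intro x hx
    obtain ⟨i, hi, rfl⟩ := mem_image.mp hx
    exact (mem_filter.mp hi).2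
  · intro x hx
    have hxP : x ∈ Pt A B σ := by
      simp only [Pt, image_union, mem_union]; exact Or.inl hx
    apply mem_image.mpr
    refine ⟨(ePi A B hd σ).symm ⟨x, hxP⟩, mem_filter.mpr ⟨mem_univ _, ?_⟩, ?_⟩
    · rw [OrderIso.apply_symm_apply]; exact hx
    · rw [OrderIso.apply_symm_apply]

lemma card_Gs (A B : Finset V) (hd : Disjoint A B) (σ : V ≃ Fin (Fintype.card V)) :
    (Gs A B hd σ).card = A.card := by
  have hinj : Function.Injective (fun i => (↑(ePi A B hd σ i) : Fin (Fintype.card V))) :=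
    fun i j h => (ePi A B hd σ).injective (Subtype.ext h)
  rw [← card_image_of_injective (Gs A B hd σ) hinj, image_Gs,
    card_image_of_injective _ σ.injective]

lemma Pt_image_F (A B : Finset V) (hd : Disjoint A B) (σ : V ≃ Fin (Fintype.card V)) :
    (A ∪ B).image ⇑(Fσ A B hd σ) = Pt A B σ := by
  have h0 : (A ∪ B).image ⇑(Fσ A B hd σ) = (Pt A B σ).image ⇑(pperm A B hd σ) := by
    rw [Pt, image_image]; rfl
  rw [h0]
  apply eq_of_subset_of_card_le
  · intro x hx
    obtain ⟨y, hy, rfl⟩ := mem_image.mp hx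
    rw [pperm, Equiv.Perm.ofSubtype_apply_of_mem _ hy]
    exact ((gperm A B hd σ) ⟨y, hy⟩).2
  · rw [card_image_of_injective _ (pperm A B hd σ).injective]

lemma ePi_coe_congr {A B : Finset V} (hd : Disjoint A B) {σ σ' : V ≃ Fin (Fintype.card V)}
    (hP : Pt A B σ = Pt A B σ') (i : Fin (A.card + B.card)) :
    (↑(ePi A B hd σ i) : Fin (Fintype.card V)) = ↑(ePi A B hd σ' i) := by
  rw [ePi, ePi, Finset.coe_orderIsoOfFin_apply, Finset.coe_orderIsoOfFin_apply]
  exact orderEmbOfFin_congr hP _ _ i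

lemma eAi_coe_congr {A : Finset V} {σ σ' : V ≃ Fin (Fintype.card V)}
    (hA : A.image σ = A.image σ') (i : Fin A.card) :
    (↑(eAi A σ i) : Fin (Fintype.card V)) = ↑(eAi A σ' i) := by
  rw [eAi, eAi, Finset.coe_orderIsoOfFin_apply, Finset.coe_orderIsoOfFin_apply]
  exact orderEmbOfFin_congr hA _ _ i

lemma disjoint_images {A B : Finset V} (hd : Disjoint A B) (σ : V ≃ Fin (Fintype.card V)) :
    Disjoint (A.image σ) (B.image σ) := by
  rw [disjoint_left]
  rintro x hxA hxB
  obtain ⟨u, hu, rfl⟩ := mem_image.mp hxA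
  obtain ⟨w, hw, hwu⟩ := mem_image.mp hxB
  exact disjoint_left.mp hd hu (σ.injective hwu ▸ hw)

lemma F_G_inj (A B : Finset V) (hd : Disjoint A B) (σ σ' : V ≃ Fin (Fintype.card V))
    (hF : Fσ A B hd σ = Fσ A B hd σ') (hG : Gs A B hd σ = Gs A B hd σ') : σ = σ' := by
  have hP : Pt A B σ = Pt A B σ' := by
    rw [← Pt_image_F A B hd σ, ← Pt_image_F A B hd σ', hF]
  have hsA : A.image σ = A.image σ' := by
    rw [← image_Gs A B hd σ, ← image_Gs A B hd σ', hG]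
    exact image_congr fun i _ => ePi_coe_congr hd hP i
  have hsB : B.image σ = B.image σ' := by
    have e1 : B.image σ = Pt A B σ \ A.image σ := by
      rw [Pt, image_union, union_sdiff_cancel_left (disjoint_images hd σ)]
    have e2 : B.image σ' = Pt A B σ' \ A.image σ' := by
      rw [Pt, image_union, union_sdiff_cancel_left (disjoint_images hd σ')]
    rw [e1, e2, hP, hsA]
  apply Equiv.ext
  intro v
  by_cases hvA : v ∈ A
  · have h1 := F_apply_mem_A A B hd σ hvA
    have h1' := F_apply_mem_A A B hd σ' hvA
    have h2 : (↑(ePi A B hd σ' (Fin.castAdd B.card ((eAi A σ).symm ⟨σ v, mem_image_of_mem σ hvA⟩)))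
        : Fin (Fintype.card V))
        = ↑(ePi A B hd σ' (Fin.castAdd B.card ((eAi A σ').symm ⟨σ' v, mem_image_of_mem σ' hvA⟩))) := by
      rw [← ePi_coe_congr hd hP, ← h1, ← h1', hF]
    have h3 := (ePi A B hd σ').injective (Subtype.ext h2)
    have h4 : ((eAi A σ).symm ⟨σ v, mem_image_of_mem σ hvA⟩ : Fin A.card)
        = (eAi A σ').symm ⟨σ' v, mem_image_of_mem σ' hvA⟩ := by
      have := congrArg Fin.val h3
      simp only [Fin.coe_castAdd] at this
      exact Fin.ext this
    have h5 : σ v = ↑(eAi A σ ((eAi A σ).symm ⟨σ v, mem_image_of_mem σ hvA⟩)) := by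
      rw [OrderIso.apply_symm_apply]
    have h6 : σ' v = ↑(eAi A σ' ((eAi A σ').symm ⟨σ' v, mem_image_of_mem σ' hvA⟩)) := by
      rw [OrderIso.apply_symm_apply]
    rw [h5, h6, ← h4, eAi_coe_congr hsA]
  by_cases hvB : v ∈ B
  · have hnA : σ v ∉ A.image σ := not_mem_image_A hd σ hvB
    have hnA' : σ' v ∉ A.image σ' := not_mem_image_A hd σ' hvB
    have h1 := F_apply_mem_B A B hd σ hvB hnA
    have h1' := F_apply_mem_B A B hd σ' hvB hnA'
    have h2 : (↑(ePi A B hd σ' (Fin.natAdd A.card ((eAi B σ).symm ⟨σ v, mem_image_of_mem σ hvB⟩)))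
        : Fin (Fintype.card V))
        = ↑(ePi A B hd σ' (Fin.natAdd A.card ((eAi B σ').symm ⟨σ' v, mem_image_of_mem σ' hvB⟩))) := by
      rw [← ePi_coe_congr hd hP, ← h1, ← h1', hF]
    have h3 := (ePi A B hd σ').injective (Subtype.ext h2)
    have h4 : ((eAi B σ).symm ⟨σ v, mem_image_of_mem σ hvB⟩ : Fin B.card)
        = (eAi B σ').symm ⟨σ' v, mem_image_of_mem σ' hvB⟩ := by
      have := congrArg Fin.val h3
      simp only [Fin.coe_natAdd] at this
      exact Fin.ext (by omega)
    have h5 : σ v = ↑(eAi B σ ((eAi B σ).symm ⟨σ v, mem_image_of_mem σ hvB⟩)) := by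
      rw [OrderIso.apply_symm_apply]
    have h6 : σ' v = ↑(eAi B σ' ((eAi B σ').symm ⟨σ' v, mem_image_of_mem σ' hvB⟩)) := by
      rw [OrderIso.apply_symm_apply]
    rw [h5, h6, ← h4, eAi_coe_congr hsB]
  · have hv : v ∉ A ∪ B := by simp [hvA, hvB]
    rw [← F_apply_not_mem A B hd σ hv, ← F_apply_not_mem A B hd σ' hv, hF]

lemma count_good (A B : Finset V) (hd : Disjoint A B) :
    (Fintype.card V).factorial ≤
      (A.card + B.card).choose A.card *
        (univ.filter (fun σ : V ≃ Fin (Fintype.card V) => Good A B σ)).card := by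
  classical
  have hcard : Fintype.card (V ≃ Fin (Fintype.card V)) = (Fintype.card V).factorial :=
    Fintype.card_equiv (Fintype.equivFin V)
  set Tgt := {τ : V ≃ Fin (Fintype.card V) // Good A B τ} ×
    {s : Finset (Fin (A.card + B.card)) // s ∈ Finset.powersetCard A.card univ} with hTgt
  have hinj : Function.Injective (fun σ : V ≃ Fin (Fintype.card V) =>
      ((⟨Fσ A B hd σ, good_F A B hd σ⟩, ⟨Gs A B hd σ,
        mem_powersetCard.mpr ⟨subset_univ _, card_Gs A B hd σ⟩⟩) : Tgt)) := by
    intro σ σ' h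
    rw [Prod.ext_iff, Subtype.ext_iff, Subtype.ext_iff] at h
    exact F_G_inj A B hd σ σ' h.1 h.2
  have hle := Fintype.card_le_of_injective _ hinj
  rw [hcard, Fintype.card_prod, Fintype.card_subtype, Fintype.card_coe,
    Finset.card_powersetCard, card_univ, Fintype.card_fin] at hle
  calc (Fintype.card V).factorial ≤ _ := hle
    _ = _ := Nat.mul_comm _ _


lemma bollobas {ι : Type*} [Fintype ι] (A B : ι → Finset V) (r t : ℕ)
    (ha : ∀ i, (A i).card ≤ r) (hb : ∀ i, (B i).card ≤ t)
    (hd : ∀ i, Disjoint (A i) (B i))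
    (hcross : ∀ i j, i ≠ j → ∃ x, x ∈ A i ∧ x ∈ B j) :
    Fintype.card ι ≤ (r + t).choose t := by
  classical
  set n := Fintype.card V with hn
  set C := (r + t).choose t with hC
  have hchoose : ∀ i, ((A i).card + (B i).card).choose (A i).card ≤ C := by
    intro i
    calc ((A i).card + (B i).card).choose (A i).card
        ≤ ((A i).card + t).choose (A i).card :=
          Nat.choose_le_choose _ (by have := hb i; omega)
      _ = ((A i).card + t).choose t := Nat.choose_symm_add
      _ ≤ (r + t).choose t := Nat.choose_le_choose _ (by have := ha i; omega)
  have hcount : ∀ i, n.factorial ≤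
      C * (univ.filter (fun σ : V ≃ Fin n => Good (A i) (B i) σ)).card := by
    intro i
    refine le_trans (count_good (A i) (B i) (hd i)) ?_
    exact Nat.mul_le_mul_right _ (hchoose i)
  have hdisjev : ∀ i j : ι, i ≠ j →
      Disjoint (univ.filter (fun σ : V ≃ Fin n => Good (A i) (B i) σ))
        (univ.filter (fun σ : V ≃ Fin n => Good (A j) (B j) σ)) := by
    intro i j hij
    rw [disjoint_left]
    intro σ hσi hσj
    have hi := (mem_filter.mp hσi).2
    have hj := (mem_filter.mp hσj).2
    obtain ⟨x, hxA, hxB⟩ := hcross i j hij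
    obtain ⟨y, hyA, hyB⟩ := hcross j i hij.symm
    exact absurd (hj y hyA x hxB) (not_lt.mpr (le_of_lt (hi x hxA y hyB)))
  have hsum : ∑ i : ι, (univ.filter (fun σ : V ≃ Fin n => Good (A i) (B i) σ)).card
      ≤ n.factorial := by
    rw [← Finset.card_biUnion (fun i _ => fun j _ hij => hdisjev i j hij)]
    calc _ ≤ (univ : Finset (V ≃ Fin n)).card := card_le_card (subset_univ _)
      _ = n.factorial := by rw [card_univ]; exact Fintype.card_equiv (Fintype.equivFin V)
  have hmain : Fintype.card ι * n.factorial ≤ C * n.factorial := by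
    calc Fintype.card ι * n.factorial
        = ∑ _i : ι, n.factorial := by rw [Finset.sum_const, card_univ, smul_eq_mul]
      _ ≤ ∑ i : ι, C * (univ.filter (fun σ : V ≃ Fin n => Good (A i) (B i) σ)).card :=
          Finset.sum_le_sum fun i _ => hcount i
      _ = C * ∑ i : ι, (univ.filter (fun σ : V ≃ Fin n => Good (A i) (B i) σ)).card := by
          rw [Finset.mul_sum]
      _ ≤ C * n.factorial := Nat.mul_le_mul_left _ hsum
  exact Nat.le_of_mul_le_mul_right hmain (Nat.factorial_pos n)

end Bol

end BollobasAux

/-- for `k ≥ C(r+ℓ, ℓ)`, every `r`-uniform hypergraph with the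
`(k,ℓ)`-cover property has cover number at most `ℓ`. -/
theorem stmt5 (r ℓ k : ℕ) (hr : 2 ≤ r) (hl : 1 ≤ ℓ) (hk : (r + ℓ).choose ℓ ≤ k)
    {V : Type*} [Fintype V] (E : Set (Set V)) (hunif : ∀ e ∈ E, e.ncard = r)
    (hprop : CoverProperty E k ℓ) :
    coverNumber E ≤ ℓ := by
  classical
  by_contra hcon
  -- `Bad S` : no cover of size at most ℓ
  set Bad : Set (Set V) → Prop := fun S => ∀ T : Set V, T.ncard ≤ ℓ → ¬ IsCover S T with hBad
  have hBadE : Bad E := by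
    intro T hT hc
    exact hcon (le_trans (Nat.sInf_le ⟨T, rfl, hc⟩) hT)
  set M : Set ℕ := {n | ∃ S, S ⊆ E ∧ Bad S ∧ S.ncard = n} with hM
  have hMne : M.Nonempty := ⟨E.ncard, E, le_refl E, hBadE, rfl⟩
  obtain ⟨S, hSsub, hSBad, hScard⟩ := Nat.sInf_mem hMne
  have hSfin : S.Finite := Set.toFinite S
  -- for each edge, a small cover of the rest, disjoint from it
  have hstep : ∀ e ∈ S, ∃ T : Set V, T.ncard ≤ ℓ ∧ IsCover (S \ {e}) T := by
    intro e he
    have hlt : (S \ {e}).ncard < sInf M := by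
      rw [← hScard]
      exact Set.ncard_diff_singleton_lt_of_mem he hSfin
    have hnm : (S \ {e}).ncard ∉ M := Nat.notMem_of_lt_sInf hlt
    by_contra hno
    push_neg at hno
    exact hnm ⟨S \ {e}, (Set.diff_subset).trans hSsub, fun T hT hc => hno T hT hc, rfl⟩
  choose T hT1 hT2 using hstep
  have hTdisj : ∀ e (he : e ∈ S), Disjoint e (T e he) := by
    intro e he
    rw [Set.disjoint_iff_inter_eq_empty, ← Set.not_nonempty_iff_eq_empty]
    intro ⟨x, hx⟩
    apply hSBad (T e he) (hT1 e he)
    intro f hf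
    by_cases hfe : f = e
    · subst hfe; exact ⟨x, hx⟩
    · exact hT2 e he f ⟨hf, hfe⟩
  -- package as finsets
  set ι := {x // x ∈ hSfin.toFinset} with hι
  have hmem : ∀ i : ι, (i : Set V) ∈ S := fun i => hSfin.mem_toFinset.mp i.2
  set A : ι → Finset V := fun i => (Set.toFinite (i : Set V)).toFinset with hA
  set B : ι → Finset V := fun i => (Set.toFinite (T i (hmem i))).toFinset with hB
  have key : Fintype.card ι ≤ (r + ℓ).choose ℓ := by
    apply Bol.bollobas A B r ℓ
    · intro i
      rw [hA, ← Set.ncard_eq_toFinset_card _, hunif _ (hSsub (hmem i))]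
    · intro i
      rw [hB, ← Set.ncard_eq_toFinset_card _]
      exact hT1 _ _
    · intro i
      rw [hA, hB, Set.Finite.disjoint_toFinset]
      exact hTdisj _ _
    · intro i j hij
      have hne : (i : Set V) ≠ (j : Set V) := fun h => hij (Subtype.ext h)
      obtain ⟨x, hx1, hx2⟩ := hT2 (j : Set V) (hmem j) (i : Set V) ⟨hmem i, hne⟩
      exact ⟨x, (Set.toFinite _).mem_toFinset.mpr hx1, (Set.toFinite _).mem_toFinset.mpr hx2⟩
  have hcardι : Fintype.card ι = S.ncard :=
    (Fintype.card_coe _).trans (Set.ncard_eq_toFinset_card _ hSfin).symm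
  obtain ⟨T0, hT0l, hT0c⟩ := hprop S hSsub (by rw [← hcardι]; exact le_trans key hk)
  exact hSBad T0 hT0l hT0c
end

section
/- Let r ≥ 2 and ℓ ≥ 1 be integers. Then: (a) every r-uniform hypergraph satisfying the (ℓ+1,ℓ)-cover property has cover number at most r·ℓ; and (b) the complete r-uniform hypergraph on r·ℓ + r − 1 vertices (whose edges are all r-element subsets of the vertex set) satisfies the (ℓ+1,ℓ)-cover property and has cover number exactly r·ℓ. -/
lemma aux_choiceCover {V : Type*} {S : Set (Set V)} (hS : S.Finite)
    (hne : ∀ e ∈ S, e.Nonempty) : ∃ T : Set V, T.ncard ≤ S.ncard ∧ IsCover S T := by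
  classical
  rcases S.eq_empty_or_nonempty with rfl | ⟨e0, he0⟩
  · exact ⟨∅, by simp, fun e he => absurd he (by simp)⟩
  · obtain ⟨v0, _⟩ := hne e0 he0
    refine ⟨(fun e => if h : e.Nonempty then h.some else v0) '' S,
      Set.ncard_image_le hS, fun e he => ⟨_, ?_, ⟨e, he, rfl⟩⟩⟩
    have h := hne e he
    simp only [dif_pos h]
    exact h.some_mem

lemma aux_sUnion_le {V : Type*} [Finite V] (r : ℕ) (S : Set (Set V))
    (hu : ∀ e ∈ S, e.ncard ≤ r) : (⋃₀ S).ncard ≤ r * S.ncard := by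
  refine Set.Finite.induction_on (motive := fun S _ => (∀ e ∈ S, e.ncard ≤ r) → (⋃₀ S).ncard ≤ r * S.ncard)
    S (Set.toFinite S) (by simp) ?_ hu
  intro a s ha hs ih hu
  rw [Set.sUnion_insert, Set.ncard_insert_of_notMem ha hs]
  calc (a ∪ ⋃₀ s).ncard ≤ a.ncard + (⋃₀ s).ncard := Set.ncard_union_le _ _
    _ ≤ r + r * s.ncard := by
        exact Nat.add_le_add (hu a (Set.mem_insert _ _))
          (ih (fun e he => hu e (Set.mem_insert_of_mem _ he)))
    _ = r * (s.ncard + 1) := by ring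

lemma aux_sUnion_ge {V : Type*} [Finite V] (r : ℕ) (S : Set (Set V))
    (hu : ∀ e ∈ S, r ≤ e.ncard) (hd : S.Pairwise (Disjoint · ·)) :
    r * S.ncard ≤ (⋃₀ S).ncard := by
  refine Set.Finite.induction_on
    (motive := fun S _ => (∀ e ∈ S, r ≤ e.ncard) → S.Pairwise (Disjoint · ·) → r * S.ncard ≤ (⋃₀ S).ncard)
    S (Set.toFinite S) (by simp) ?_ hu hd
  intro a s ha hs ih hu hd
  rw [Set.sUnion_insert, Set.ncard_insert_of_notMem ha hs]
  have hdisj : Disjoint a (⋃₀ s) := by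
    rw [Set.disjoint_sUnion_right]
    intro t ht
    exact hd (Set.mem_insert _ _) (Set.mem_insert_of_mem _ ht)
      (fun h => ha (h ▸ ht))
  rw [Set.ncard_union_eq hdisj]
  have := ih (fun e he => hu e (Set.mem_insert_of_mem _ he))
    (hd.mono (Set.subset_insert _ _))
  have := hu a (Set.mem_insert _ _)
  calc r * (s.ncard + 1) = r + r * s.ncard := by ring
    _ ≤ a.ncard + (⋃₀ s).ncard := by omega


/-- (a) every `r`-uniform hypergraph with the `(ℓ+1,ℓ)`-cover property
has cover number at most `r·ℓ`; (b) the complete `r`-uniform hypergraph on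
`r·ℓ + r - 1` vertices satisfies the `(ℓ+1,ℓ)`-cover property and has cover number
exactly `r·ℓ`. -/
theorem stmt8 (r ℓ : ℕ) (hr : 2 ≤ r) (hl : 1 ≤ ℓ) :
    (∀ (V : Type) [Fintype V] (E : Set (Set V)), (∀ e ∈ E, e.ncard = r) →
      CoverProperty E (ℓ + 1) ℓ → coverNumber E ≤ r * ℓ) ∧
    (CoverProperty {e : Set (Fin (r * ℓ + r - 1)) | e.ncard = r} (ℓ + 1) ℓ ∧
      coverNumber {e : Set (Fin (r * ℓ + r - 1)) | e.ncard = r} = r * ℓ) := by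
  classical
  have partA : ∀ (V : Type) [Fintype V] (E : Set (Set V)), (∀ e ∈ E, e.ncard = r) →
      CoverProperty E (ℓ + 1) ℓ → coverNumber E ≤ r * ℓ := by
    intro V _ E hunif hcp
    -- the set of matchings
    set M : Set (Set (Set V)) := {S | S ⊆ E ∧ S.Pairwise (Disjoint · ·)} with hM
    have hMne : M.Nonempty := ⟨∅, Set.empty_subset _, Set.pairwise_empty _⟩
    obtain ⟨S, hSM, hSmax⟩ :=
      Set.Finite.exists_maximalFor Set.ncard M (Set.toFinite M) hMne
    obtain ⟨hSE, hSd⟩ := hSM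
    have hSedge_ne : ∀ e ∈ S, e.Nonempty := fun e he =>
      Set.nonempty_of_ncard_ne_zero (by rw [hunif e (hSE he)]; omega)
    -- the matching has size at most ℓ
    have hScard : S.ncard ≤ ℓ := by
      by_contra hgt
      push_neg at hgt
      obtain ⟨S', hS'S, hS'card⟩ := Set.exists_subset_card_eq (show ℓ + 1 ≤ S.ncard from hgt)
      obtain ⟨T, hTcard, hTcov⟩ := hcp S' (hS'S.trans hSE) (le_of_eq hS'card)
      have hS'ne : S'.Nonempty := Set.nonempty_of_ncard_ne_zero (by omega)
      obtain ⟨e0, he0⟩ := hS'ne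
      obtain ⟨v0, _⟩ := hTcov e0 he0
      set g : Set V → V := fun e => if h : (e ∩ T).Nonempty then h.some else v0 with hg
      have hgmem : ∀ e ∈ S', g e ∈ e ∩ T := by
        intro e he
        have h := hTcov e he
        simp only [hg, dif_pos h]
        exact h.some_mem
      have hinj : Set.InjOn g S' := by
        intro e he f hf hef
        by_contra hne
        have hd := hSd (hS'S he) (hS'S hf) hne
        exact Set.disjoint_left.mp hd (hgmem e he).1 (hef ▸ (hgmem f hf).1)
      have := Set.ncard_le_ncard_of_injOn g (fun e he => (hgmem e he).2) hinj (Set.toFinite T)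
      omega
    -- the union of the matching is a cover
    have hcov : IsCover E (⋃₀ S) := by
      intro e heE
      by_contra hcon
      rw [Set.not_nonempty_iff_eq_empty] at hcon
      have hdisj : ∀ t ∈ S, Disjoint e t := by
        intro t ht
        rw [Set.disjoint_iff_inter_eq_empty]
        apply Set.eq_empty_of_subset_empty
        rw [← hcon]
        exact Set.inter_subset_inter_right e (Set.subset_sUnion_of_mem ht)
      have hene : e.Nonempty :=
        Set.nonempty_of_ncard_ne_zero (by rw [hunif e heE]; omega)
      have heS : e ∉ S := by
        intro heS
        exact hene.ne_empty (by simpa using disjoint_self.mp (hdisj e heS))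
      have hmem : insert e S ∈ M := by
        refine ⟨Set.insert_subset heE hSE, ?_⟩
        apply Set.Pairwise.insert hSd
        intro t ht _
        exact ⟨hdisj t ht, (hdisj t ht).symm⟩
      have hle : S.ncard ≤ (insert e S).ncard := by
        rw [Set.ncard_insert_of_notMem heS (Set.toFinite S)]; omega
      have := hSmax (j := insert e S) hmem hle
      rw [Set.ncard_insert_of_notMem heS (Set.toFinite S)] at this
      omega
    have hcard : (⋃₀ S).ncard ≤ r * ℓ := by
      calc (⋃₀ S).ncard ≤ r * S.ncard :=
            aux_sUnion_le r S (fun e he => le_of_eq (hunif e (hSE he)))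
        _ ≤ r * ℓ := Nat.mul_le_mul_left r hScard
    have hmem : (⋃₀ S).ncard ∈ {n | ∃ T : Set V, T.ncard = n ∧ IsCover E T} :=
      ⟨⋃₀ S, rfl, hcov⟩
    exact le_trans (Nat.sInf_le hmem) hcard
  have hbCov : CoverProperty {e : Set (Fin (r * ℓ + r - 1)) | e.ncard = r} (ℓ + 1) ℓ := by
    intro S hSE hScard
    have hne : ∀ e ∈ S, e.Nonempty := fun e he =>
      Set.nonempty_of_ncard_ne_zero (by have := hSE he; simp only [Set.mem_setOf_eq] at this; omega)
    by_cases hle : S.ncard ≤ ℓ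
    · obtain ⟨T, hT, hTcov⟩ := aux_choiceCover (Set.toFinite S) hne
      exact ⟨T, hT.trans hle, hTcov⟩
    · have hScard' : S.ncard = ℓ + 1 := by omega
      have hnd : ¬ S.Pairwise (Disjoint · ·) := by
        intro hd
        have h1 := aux_sUnion_ge r S
          (fun e he => ge_of_eq (hSE he)) hd
        have h2 : (⋃₀ S).ncard ≤ r * ℓ + r - 1 := by
          calc (⋃₀ S).ncard ≤ (Set.univ : Set (Fin (r * ℓ + r - 1))).ncard :=
                Set.ncard_le_ncard (Set.subset_univ _) (Set.toFinite _)
            _ = r * ℓ + r - 1 := by rw [Set.ncard_univ]; simp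
        rw [hScard', Nat.mul_succ] at h1
        omega
      rw [Set.Pairwise] at hnd
      push_neg at hnd
      obtain ⟨e, he, f, hf, hef, hndisj⟩ := hnd
      obtain ⟨v, hv⟩ := Set.not_disjoint_iff_nonempty_inter.mp hndisj
      have hpair : ({e, f} : Set (Set (Fin (r * ℓ + r - 1)))) ⊆ S := by
        intro x hx; rcases hx with rfl | rfl
        · exact he
        · exact hf
      have hS'card : (S \ {e, f}).ncard = ℓ - 1 := by
        rw [Set.ncard_diff hpair (Set.toFinite _), Set.ncard_pair hef, hScard']; omega
      obtain ⟨T', hT', hT'cov⟩ := aux_choiceCover (Set.toFinite (S \ {e, f}))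
        (fun g hg => hne g hg.1)
      refine ⟨insert v T', ?_, ?_⟩
      · have := Set.ncard_insert_le v T'
        omega
      · intro g hg
        by_cases hge : g = e
        · exact ⟨v, hge ▸ hv.1, Set.mem_insert _ _⟩
        by_cases hgf : g = f
        · exact ⟨v, hgf ▸ hv.2, Set.mem_insert _ _⟩
        obtain ⟨w, hw⟩ := hT'cov g ⟨hg, by simp [hge, hgf]⟩
        exact ⟨w, hw.1, Set.mem_insert_of_mem _ hw.2⟩
  refine ⟨partA, hbCov, ?_⟩
  · -- cover number of the complete r-graph is exactly r·ℓ
    have hrl : 1 ≤ r * ℓ := Nat.one_le_iff_ne_zero.mpr (by positivity)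
    set E : Set (Set (Fin (r * ℓ + r - 1))) := {e | e.ncard = r} with hE
    have hEne : ∀ e ∈ E, e.Nonempty := fun e he =>
      Set.nonempty_of_ncard_ne_zero (by rw [hE] at he; simp only [Set.mem_setOf_eq] at he; omega)
    have hub : coverNumber E ≤ r * ℓ :=
      partA (Fin (r * ℓ + r - 1)) E (fun e he => he) hbCov
    have hmemuniv : (Set.univ : Set (Fin (r * ℓ + r - 1))).ncard ∈
        {n | ∃ T : Set (Fin (r * ℓ + r - 1)), T.ncard = n ∧ IsCover E T} :=
      ⟨Set.univ, rfl, fun e he => by rw [Set.inter_univ]; exact hEne e he⟩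
    obtain ⟨T, hTcard, hTcov⟩ := Nat.sInf_mem (Set.nonempty_of_mem hmemuniv)
    have hlb : r * ℓ ≤ coverNumber E := by
      rw [coverNumber, ← hTcard]
      by_contra hcon
      push_neg at hcon
      have hcompl : r ≤ (Tᶜ).ncard := by
        have h1 := Set.ncard_add_ncard_compl T (Set.toFinite T) (Set.toFinite _)
        have h2 : Nat.card (Fin (r * ℓ + r - 1)) = r * ℓ + r - 1 := by simp
        omega
      obtain ⟨e, heT, hecard⟩ := Set.exists_subset_card_eq hcompl
      obtain ⟨w, hw⟩ := hTcov e hecard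
      exact (heT hw.1) hw.2
    omega
end

section
/- Let r ≥ 2, ℓ ≥ 1 and t ≥ ℓ be integers, and let k be an integer with k < binomial(t+r, ℓ)/binomial(t, ℓ). Then there exists an r-uniform hypergraph satisfying the (k,ℓ)-cover property whose cover number is greater than t; in fact, the complete r-uniform hypergraph on t+r vertices has cover number t+1 and satisfies the (k,ℓ)-cover property. -/
open Finset

lemma cover_iff (r t : ℕ) (hr : 1 ≤ r) (T : Set (Fin (t + r))) :
    IsCover {e : Set (Fin (t + r)) | e.ncard = r} T ↔ t + 1 ≤ T.ncard := by
  have hcompl : T.ncard + Tᶜ.ncard = t + r := by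
    rw [Set.ncard_add_ncard_compl, Nat.card_eq_fintype_card, Fintype.card_fin]
  constructor
  · intro h
    by_contra hlt
    push_neg at hlt
    have hc : r ≤ Tᶜ.ncard := by omega
    obtain ⟨e, he, hecard⟩ := Set.exists_subset_card_eq hc
    obtain ⟨x, hx1, hx2⟩ := h e hecard
    exact he hx1 hx2
  · intro h e (he : e.ncard = r)
    rw [Set.nonempty_iff_ne_empty]
    intro hempty
    have hsub : e ⊆ Tᶜ := fun x hx hxT =>
      Set.eq_empty_iff_forall_notMem.mp hempty x ⟨hx, hxT⟩
    have := Set.ncard_le_ncard hsub (Set.toFinite _)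
    omega

lemma coverNum_complete (r t : ℕ) (hr : 1 ≤ r) :
    coverNumber {e : Set (Fin (t + r)) | e.ncard = r} = t + 1 := by
  have hmem : (t + 1) ∈ {n | ∃ T : Set (Fin (t + r)), T.ncard = n ∧
      IsCover {e : Set (Fin (t + r)) | e.ncard = r} T} := by
    have huniv : t + 1 ≤ (Set.univ : Set (Fin (t + r))).ncard := by
      rw [Set.ncard_univ, Nat.card_eq_fintype_card, Fintype.card_fin]; omega
    obtain ⟨T, _, hTcard⟩ := Set.exists_subset_card_eq huniv
    exact ⟨T, hTcard, (cover_iff r t hr T).mpr (by omega)⟩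
  refine le_antisymm (Nat.sInf_le hmem) (le_csInf ⟨_, hmem⟩ ?_)
  rintro m ⟨T, hTcard, hcov⟩
  have := (cover_iff r t hr T).mp hcov
  omega

lemma prop_complete (r ℓ t k : ℕ) (ht : ℓ ≤ t)
    (hk : (k : ℝ) < ((t + r).choose ℓ : ℝ) / ((t.choose ℓ : ℝ))) :
    CoverProperty {e : Set (Fin (t + r)) | e.ncard = r} k ℓ := by
  classical
  intro S hS hcard
  by_contra hcon
  push_neg at hcon
  -- turn hk into a Nat inequality
  have hpos : 0 < t.choose ℓ := Nat.choose_pos ht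
  have hknat : k * t.choose ℓ < (t + r).choose ℓ := by
    have : (k : ℝ) * (t.choose ℓ : ℝ) < ((t + r).choose ℓ : ℝ) := by
      rw [← lt_div_iff₀ (by exact_mod_cast hpos)]
      exact hk
    exact_mod_cast this
  have hSfin : S.Finite := Set.toFinite S
  set S' : Finset (Set (Fin (t + r))) := hSfin.toFinset with hS'
  have hsub : powersetCard ℓ (univ : Finset (Fin (t + r))) ⊆
      S'.biUnion (fun e => powersetCard ℓ (e.toFinite.toFinset)ᶜ) := by
    intro L hL
    rw [mem_powersetCard] at hL
    have hLcard : (↑L : Set (Fin (t + r))).ncard ≤ ℓ := by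
      rw [Set.ncard_coe_finset]; omega
    have hnc := hcon ↑L hLcard
    rw [IsCover] at hnc
    push_neg at hnc
    obtain ⟨e, heS, hne⟩ := hnc
    rw [mem_biUnion]
    refine ⟨e, by rw [hS', Set.Finite.mem_toFinset]; exact heS, ?_⟩
    rw [mem_powersetCard]
    refine ⟨fun x hx => ?_, hL.2⟩
    rw [mem_compl, Set.Finite.mem_toFinset]
    intro hxe
    exact Set.eq_empty_iff_forall_notMem.mp hne x ⟨hxe, hx⟩
  have hcount := card_le_card hsub
  rw [card_powersetCard, card_univ, Fintype.card_fin] at hcount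
  have hbound : (S'.biUnion (fun e => powersetCard ℓ (e.toFinite.toFinset)ᶜ)).card ≤
      S'.card * t.choose ℓ := by
    refine le_trans (card_biUnion_le) ?_
    rw [← smul_eq_mul, ← Finset.sum_const]
    apply Finset.sum_le_sum
    intro e he
    rw [card_powersetCard, card_compl, Fintype.card_fin]
    have hecard : e.ncard = r := hS (by rwa [hS', Set.Finite.mem_toFinset] at he)
    rw [← Set.ncard_eq_toFinset_card e, hecard]
    exact Nat.choose_le_choose ℓ (by omega)
  have hS'card : S'.card ≤ k := by
    rw [hS', ← Set.ncard_eq_toFinset_card S hSfin]; exact hcard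
  have : (t + r).choose ℓ ≤ k * t.choose ℓ :=
    le_trans (le_trans hcount hbound) (Nat.mul_le_mul_right _ hS'card)
  omega


/-- for `t ≥ ℓ` and `k < C(t+r, ℓ)/C(t, ℓ)`, there is an `r`-uniform
hypergraph with the `(k,ℓ)`-cover property and cover number greater than `t`; in
fact, the complete `r`-uniform hypergraph on `t+r` vertices has cover number `t+1`
and satisfies the `(k,ℓ)`-cover property. -/
theorem stmt9 (r ℓ t k : ℕ) (hr : 2 ≤ r) (hl : 1 ≤ ℓ) (ht : ℓ ≤ t)
    (hk : (k : ℝ) < ((t + r).choose ℓ : ℝ) / ((t.choose ℓ : ℝ))) :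
    (∃ (n : ℕ) (E : Set (Set (Fin n))), (∀ e ∈ E, e.ncard = r) ∧
        CoverProperty E k ℓ ∧ t < coverNumber E) ∧
    coverNumber {e : Set (Fin (t + r)) | e.ncard = r} = t + 1 ∧
    CoverProperty {e : Set (Fin (t + r)) | e.ncard = r} k ℓ := by
  have h1 := coverNum_complete r t (by omega)
  have h2 := prop_complete r ℓ t k ht hk
  exact ⟨⟨t + r, {e : Set (Fin (t + r)) | e.ncard = r}, fun e he => he, h2, by rw [h1]; omega⟩, h1, h2⟩
end

section
/- Let k and r be integers with e^(r/2) > k > r ≥ 2. Then there exists an r-uniform hypergraph satisfying the (k,r)-cover property whose cover number is at least r²/(4·log k), where log denotes the natural logarithm. -/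
/-- Averaging: in a nonempty family of `r`-sets in `Fin n`, some vertex lies in at least
an `r/n` fraction of the sets. -/
lemma exists_popular_vertex {n r : ℕ} (hn : 0 < n) (U : Finset (Finset (Fin n)))
    (hne : U.Nonempty) (hcard : ∀ e ∈ U, e.card = r) :
    ∃ v : Fin n, (r : ℝ) * U.card / n ≤ ((U.filter (fun e => v ∈ e)).card : ℝ) := by
  by_contra h
  push_neg at h
  have hsumN : ∑ v : Fin n, (U.filter (fun e => v ∈ e)).card = ∑ e ∈ U, e.card := by
    simp only [Finset.card_filter]
    rw [Finset.sum_comm]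
    refine Finset.sum_congr rfl fun e _ => ?_
    rw [← Finset.card_filter]
    congr 1
    exact Finset.filter_univ_mem e
  have hsumN2 : ∑ e ∈ U, e.card = U.card * r := by
    rw [Finset.sum_congr rfl hcard, Finset.sum_const, smul_eq_mul]
  have hsum : ∑ v : Fin n, ((U.filter (fun e => v ∈ e)).card : ℝ) = (r : ℝ) * U.card := by
    rw [← Nat.cast_sum, hsumN, hsumN2]
    push_cast
    ring
  have huniv : (Finset.univ : Finset (Fin n)).Nonempty := ⟨⟨0, hn⟩, Finset.mem_univ _⟩
  have hn' : (n : ℝ) ≠ 0 := by positivity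
  have hlt : (r : ℝ) * U.card < (n : ℝ) * ((r : ℝ) * U.card / n) := by
    calc (r : ℝ) * U.card = ∑ v : Fin n, ((U.filter (fun e => v ∈ e)).card : ℝ) := hsum.symm
      _ < ∑ _v : Fin n, (r : ℝ) * U.card / n :=
          Finset.sum_lt_sum_of_nonempty huniv fun v _ => h v
      _ = (n : ℝ) * ((r : ℝ) * U.card / n) := by
          rw [Finset.sum_const, Finset.card_univ, Fintype.card_fin, nsmul_eq_mul]
  have heq : (n : ℝ) * ((r : ℝ) * U.card / n) = (r : ℝ) * U.card := by field_simp
  linarith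

/-- Greedy covering: after choosing `j` vertices greedily, at most a `((n-r)/n)^j` fraction of
the family of `r`-sets remains uncovered. -/
lemma greedy_cover {n r : ℕ} (hn : 0 < n) (hrn : r ≤ n) (𝒮 : Finset (Finset (Fin n)))
    (hcard : ∀ e ∈ 𝒮, e.card = r) (j : ℕ) :
    ∃ T : Finset (Fin n), T.card ≤ j ∧
      (((𝒮.filter (fun e => Disjoint e T)).card : ℝ)
        ≤ (𝒮.card : ℝ) * (((n : ℝ) - r) / n) ^ j) := by
  have hn' : (n : ℝ) ≠ 0 := by positivity
  have hq0 : (0 : ℝ) ≤ ((n : ℝ) - r) / n := by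
    apply div_nonneg _ (by positivity)
    have : (r : ℝ) ≤ n := by exact_mod_cast hrn
    linarith
  induction j with
  | zero =>
    refine ⟨∅, le_refl _, ?_⟩
    simp only [pow_zero, mul_one]
    exact_mod_cast Finset.card_le_card (Finset.filter_subset _ _)
  | succ j ih =>
    obtain ⟨T, hTcard, hTbound⟩ := ih
    set U := 𝒮.filter (fun e => Disjoint e T) with hU
    rcases U.eq_empty_or_nonempty with hUe | hUne
    · refine ⟨T, le_trans hTcard (Nat.le_succ j), ?_⟩
      rw [← hU, hUe]
      simp only [Finset.card_empty, Nat.cast_zero]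
      positivity
    · obtain ⟨v, hv⟩ := exists_popular_vertex hn U hUne
        (fun e he => hcard e (Finset.mem_of_mem_filter e he))
      refine ⟨insert v T, le_trans (Finset.card_insert_le v T) (by omega), ?_⟩
      have hset : 𝒮.filter (fun e => Disjoint e (insert v T))
          = U.filter (fun e => v ∉ e) := by
        rw [hU, Finset.filter_filter]
        apply Finset.filter_congr
        intro e _
        simp [Finset.disjoint_insert_right, and_comm]
      rw [hset]
      have hsplit : (U.filter (fun e => v ∉ e)).card
          = U.card - (U.filter (fun e => v ∈ e)).card := by
        have h2 : (U.filter (fun e => v ∈ e)).card + (U.filter (fun e => v ∉ e)).card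
            = U.card := by
          have := Finset.card_filter_add_card_filter_not (s := U)
            (p := fun e => v ∈ e)
          simpa using this
        omega
      have hle : (U.filter (fun e => v ∈ e)).card ≤ U.card :=
        Finset.card_le_card (Finset.filter_subset _ _)
      rw [hsplit]
      rw [Nat.cast_sub hle]
      have key : (U.card : ℝ) - (U.filter (fun e => v ∈ e)).card
          ≤ (U.card : ℝ) * (((n : ℝ) - r) / n) := by
        have : (U.card : ℝ) - (r : ℝ) * U.card / n = (U.card : ℝ) * (((n : ℝ) - r) / n) := by
          field_simp
        linarith
      calc (U.card : ℝ) - (U.filter (fun e => v ∈ e)).card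
          ≤ (U.card : ℝ) * (((n : ℝ) - r) / n) := key
        _ ≤ ((𝒮.card : ℝ) * (((n : ℝ) - r) / n) ^ j) * (((n : ℝ) - r) / n) :=
            mul_le_mul_of_nonneg_right hTbound hq0
        _ = (𝒮.card : ℝ) * (((n : ℝ) - r) / n) ^ (j + 1) := by ring

/-- for `e^(r/2) > k > r ≥ 2`, there is an `r`-uniform hypergraph with
the `(k,r)`-cover property whose cover number is at least `r²/(4·log k)`. -/
theorem stmt11 (r k : ℕ) (hr : 2 ≤ r) (hk : r < k)
    (hke : (k : ℝ) < Real.exp ((r : ℝ) / 2)) :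
    ∃ (n : ℕ) (E : Set (Set (Fin n))), (∀ e ∈ E, e.ncard = r) ∧
      CoverProperty E k r ∧
      ((r : ℝ) ^ 2 / (4 * Real.log k) ≤ (coverNumber E : ℝ)) := by
  have hk1 : (1 : ℝ) < k := by exact_mod_cast (by omega : 1 < k)
  have hk0 : (0 : ℝ) < k := by linarith
  set L : ℝ := Real.log k with hLdef
  have hL0 : 0 < L := Real.log_pos hk1
  have hLr : L < (r : ℝ) / 2 := by
    rw [hLdef]
    have h' := hke
    rw [← Real.exp_log hk0] at h'
    exact Real.exp_lt_exp.mp h'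
  have hr0 : (0 : ℝ) < r := by exact_mod_cast (by omega : 0 < r)
  set B : ℝ := (r : ℝ) ^ 2 / (4 * L) with hBdef
  have hB0 : 0 < B := by positivity
  set b : ℕ := ⌈B⌉₊ with hbdef
  have hb1 : 1 ≤ b := Nat.one_le_iff_ne_zero.mpr (by
    intro h0
    have := Nat.ceil_pos.mpr hB0
    omega)
  set n : ℕ := b + (r - 1) with hndef
  have hrn : r ≤ n := by omega
  have hn0 : 0 < n := by omega
  have hn' : (n : ℝ) ≠ 0 := by positivity
  have hncast : (n : ℝ) = (b : ℝ) + (r : ℝ) - 1 := by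
    rw [hndef]
    push_cast [Nat.cast_sub (by omega : 1 ≤ r)]
    ring
  have hnB : (n : ℝ) ≤ B + r := by
    have hceil : (b : ℝ) < B + 1 := Nat.ceil_lt_add_one hB0.le
    rw [hncast]; linarith
  have hnL : (n : ℝ) * L < (r : ℝ) ^ 2 := by
    have h1 : (n : ℝ) * L ≤ (B + r) * L := mul_le_mul_of_nonneg_right hnB hL0.le
    have hBL : B * L = (r : ℝ) ^ 2 / 4 := by
      rw [hBdef]; field_simp
    have h2 : (r : ℝ) * L < (r : ℝ) * ((r : ℝ) / 2) := by
      exact mul_lt_mul_of_pos_left hLr hr0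
    nlinarith
  refine ⟨n, {e : Set (Fin n) | e.ncard = r}, fun e he => he, ?_, ?_⟩
  · -- CoverProperty
    intro S hSE hSk
    have hSfin : S.Finite := S.toFinite
    set 𝒮 : Finset (Finset (Fin n)) :=
      hSfin.toFinset.image (fun e => e.toFinite.toFinset) with h𝒮
    have hmem : ∀ e ∈ S, e.toFinite.toFinset ∈ 𝒮 := by
      intro e he
      exact Finset.mem_image_of_mem _ (hSfin.mem_toFinset.mpr he)
    have hcard : ∀ es ∈ 𝒮, es.card = r := by
      intro es hes
      rw [h𝒮, Finset.mem_image] at hes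
      obtain ⟨e, he, rfl⟩ := hes
      have heS : e ∈ S := hSfin.mem_toFinset.mp he
      rw [← Set.ncard_eq_toFinset_card e e.toFinite]
      exact hSE heS
    have h𝒮k : 𝒮.card ≤ k := by
      calc 𝒮.card ≤ hSfin.toFinset.card := Finset.card_image_le
        _ = S.ncard := (Set.ncard_eq_toFinset_card S hSfin).symm
        _ ≤ k := hSk
    obtain ⟨T, hTcard, hTbound⟩ := greedy_cover hn0 hrn 𝒮 hcard r
    -- show the uncovered part is empty
    have hq0 : (0 : ℝ) ≤ ((n : ℝ) - r) / n := by
      apply div_nonneg _ (by positivity)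
      have : (r : ℝ) ≤ n := by exact_mod_cast hrn
      linarith
    have hqexp : ((n : ℝ) - r) / n ≤ Real.exp (-((r : ℝ) / n)) := by
      have h1 : -((r : ℝ) / n) + 1 ≤ Real.exp (-((r : ℝ) / n)) := Real.add_one_le_exp _
      have h2 : ((n : ℝ) - r) / n = 1 - (r : ℝ) / n := by field_simp
      linarith
    have hqpow : (((n : ℝ) - r) / n) ^ r ≤ Real.exp (-((r : ℝ) ^ 2 / n)) := by
      calc (((n : ℝ) - r) / n) ^ r ≤ Real.exp (-((r : ℝ) / n)) ^ r :=
            pow_le_pow_left₀ hq0 hqexp r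
        _ = Real.exp ((r : ℕ) * (-((r : ℝ) / n))) := (Real.exp_nat_mul _ r).symm
        _ = Real.exp (-((r : ℝ) ^ 2 / n)) := by
            congr 1
            push_cast
            ring
    have hkexp : (k : ℝ) < Real.exp ((r : ℝ) ^ 2 / n) := by
      have hlog : Real.log k < (r : ℝ) ^ 2 / n := by
        rw [lt_div_iff₀ (by positivity : (0 : ℝ) < (n : ℝ)), ← hLdef]
        linarith [hnL]
      calc (k : ℝ) = Real.exp (Real.log k) := (Real.exp_log hk0).symm
        _ < Real.exp ((r : ℝ) ^ 2 / n) := Real.exp_lt_exp.mpr hlog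
    have hfinal : ((𝒮.filter (fun e => Disjoint e T)).card : ℝ) < 1 := by
      calc ((𝒮.filter (fun e => Disjoint e T)).card : ℝ)
          ≤ (𝒮.card : ℝ) * (((n : ℝ) - r) / n) ^ r := hTbound
        _ ≤ (k : ℝ) * Real.exp (-((r : ℝ) ^ 2 / n)) := by
            apply mul_le_mul (by exact_mod_cast h𝒮k) hqpow (by positivity) hk0.le
        _ < Real.exp ((r : ℝ) ^ 2 / n) * Real.exp (-((r : ℝ) ^ 2 / n)) := by
            apply mul_lt_mul_of_pos_right hkexp (Real.exp_pos _)
        _ = 1 := by rw [← Real.exp_add]; simp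
    have hempty : 𝒮.filter (fun e => Disjoint e T) = ∅ := by
      have h1 : (𝒮.filter (fun e => Disjoint e T)).card < 1 := by exact_mod_cast hfinal
      exact Finset.card_eq_zero.mp (by omega)
    refine ⟨(↑T : Set (Fin n)), ?_, ?_⟩
    · rw [Set.ncard_coe_finset]; exact hTcard
    · intro e heS
      have hes : e.toFinite.toFinset ∈ 𝒮 := hmem e heS
      have hnd : ¬ Disjoint e.toFinite.toFinset T := by
        intro hd
        have : e.toFinite.toFinset ∈ 𝒮.filter (fun e => Disjoint e T) :=
          Finset.mem_filter.mpr ⟨hes, hd⟩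
        rw [hempty] at this
        exact absurd this (Finset.notMem_empty _)
      obtain ⟨x, hx1, hx2⟩ := Finset.not_disjoint_iff.mp hnd
      exact ⟨x, e.toFinite.mem_toFinset.mp hx1, hx2⟩
  · -- cover number bound
    have hblower : ∀ m ∈ {m | ∃ T : Set (Fin n), T.ncard = m ∧
        IsCover {e : Set (Fin n) | e.ncard = r} T}, b ≤ m := by
      rintro m ⟨T, hTm, hTcover⟩
      by_contra hlt
      push_neg at hlt
      have hcompl : T.ncard + Tᶜ.ncard = n := by
        rw [Set.ncard_add_ncard_compl]
        simp
      have hrT : r ≤ Tᶜ.ncard := by omega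
      obtain ⟨e, heT, heR⟩ := Set.exists_subset_card_eq hrT
      obtain ⟨x, hx1, hx2⟩ := hTcover e heR
      exact heT hx1 hx2
    have hne : {m | ∃ T : Set (Fin n), T.ncard = m ∧
        IsCover {e : Set (Fin n) | e.ncard = r} T}.Nonempty := by
      refine ⟨n, Set.univ, ?_, ?_⟩
      · rw [Set.ncard_univ]; simp
      · intro e he
        rw [Set.inter_univ]
        apply Set.nonempty_of_ncard_ne_zero
        rw [he]; omega
    have hble : b ≤ coverNumber {e : Set (Fin n) | e.ncard = r} :=
      le_csInf hne hblower
    refine le_trans (Nat.le_ceil B) ?_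
    exact_mod_cast hble
end

section
/- Let r ≥ 2, ℓ ≥ 1 and k > ℓ be integers. Then there exists an r-uniform hypergraph satisfying the (k,ℓ)-cover property whose cover number is at least r·ℓ²/(6k). -/
/-! ### Auxiliary material for Statement 12. -/

open Set

/-- The `i`-th blob of `c` consecutive vertices. -/
def copyS (c i N : ℕ) : Set (Fin N) := {v | (v : ℕ) / c = i}

/-- All `r`-subsets of blobs. -/
def copyE (r c N : ℕ) : Set (Set (Fin N)) := {e | e.ncard = r ∧ ∃ i, e ⊆ copyS c i N}

lemma copyS_ncard (c i b : ℕ) (hc : 0 < c) (hi : i < b) :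
    (copyS c i (b * c)).ncard = c := by
  have hlt : ∀ j : Fin c, c * i + (j : ℕ) < b * c := by
    intro j
    calc c * i + (j : ℕ) < c * i + c := by omega
      _ = c * (i + 1) := by ring
      _ ≤ c * b := Nat.mul_le_mul_left c hi
      _ = b * c := Nat.mul_comm c b
  have hrange : copyS c i (b * c)
      = Set.range (fun j : Fin c => (⟨c * i + (j : ℕ), hlt j⟩ : Fin (b * c))) := by
    ext v
    simp only [copyS, Set.mem_setOf_eq, Set.mem_range]
    constructor
    · intro h
      refine ⟨⟨(v : ℕ) % c, Nat.mod_lt _ hc⟩, ?_⟩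
      apply Fin.ext
      show c * i + (v : ℕ) % c = (v : ℕ)
      rw [← h]
      exact Nat.div_add_mod (v : ℕ) c
    · rintro ⟨j, rfl⟩
      show (c * i + (j : ℕ)) / c = i
      rw [Nat.mul_add_div hc, Nat.div_eq_of_lt j.isLt, add_zero]
  have hinj : Function.Injective fun j : Fin c => (⟨c * i + (j : ℕ), hlt j⟩ : Fin (b * c)) := by
    intro a b hab
    have : c * i + (a : ℕ) = c * i + (b : ℕ) := congrArg Fin.val hab
    exact Fin.ext (by omega)
  rw [hrange, ← Set.image_univ, Set.ncard_image_of_injective _ hinj, Set.ncard_univ,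
    Nat.card_eq_fintype_card, Fintype.card_fin]

/-- `ncard` of a finite-indexed union is at most the sum of the `ncard`s. -/
lemma ncard_biUnion_le' {α : Type*} [Finite α] (I : Finset ℕ) (f : ℕ → Set α) :
    (⋃ i ∈ I, f i).ncard ≤ ∑ i ∈ I, (f i).ncard := by
  classical
  induction I using Finset.induction_on with
  | empty => simp
  | insert _ _ h ih =>
    rename_i a I'
    rw [Finset.sum_insert h, Finset.set_biUnion_insert]
    exact le_trans (Set.ncard_union_le _ _) (by omega)

/-- Sum of sizes of pairwise disjoint subsets of `S` is at most `|S|`. -/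
lemma sum_ncard_le {α : Type*} [Finite α] (I : Finset ℕ) (f : ℕ → Set α) :
    ∀ S : Set α, (∀ i ∈ I, f i ⊆ S) →
    (∀ i ∈ I, ∀ j ∈ I, i ≠ j → ∀ x, x ∈ f i → x ∉ f j) →
    ∑ i ∈ I, (f i).ncard ≤ S.ncard := by
  classical
  induction I using Finset.induction_on with
  | empty => intro S _ _; simp
  | insert _ _ h ih =>
    rename_i a I'
    intro S hsub hdis
    rw [Finset.sum_insert h]
    have h1 : ∀ i ∈ I', f i ⊆ S \ f a := by
      intro i hi x hx
      exact ⟨hsub i (Finset.mem_insert_of_mem hi) hx,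
        fun hxa => hdis a (Finset.mem_insert_self a I') i (Finset.mem_insert_of_mem hi)
          (by rintro rfl; exact h hi) x hxa hx⟩
    have h2 := ih (S \ f a) h1 (fun i hi j hj hij => hdis i (Finset.mem_insert_of_mem hi) j
      (Finset.mem_insert_of_mem hj) hij)
    have h3 : (S \ f a).ncard + (f a).ncard = S.ncard :=
      Set.ncard_diff_add_ncard_of_subset (hsub a (Finset.mem_insert_self a I'))
    omega

/-- `ncard` of a finite sUnion of small sets. -/
lemma ncard_sUnion_le {α : Type*} [Finite α] (F : Set (Set α)) (q : ℕ)
    (h : ∀ a ∈ F, a.ncard ≤ q) : (⋃₀ F).ncard ≤ F.ncard * q := by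
  classical
  have key : ∀ G : Finset (Set α), (∀ a ∈ G, a.ncard ≤ q) →
      (⋃₀ (G : Set (Set α))).ncard ≤ G.card * q := by
    intro G
    induction G using Finset.induction_on with
    | empty => simp
    | insert _ _ hnm ih =>
      rename_i a G'
      intro hG
      rw [Finset.coe_insert, Set.sUnion_insert, Finset.card_insert_of_notMem hnm]
      calc (a ∪ ⋃₀ (G' : Set (Set α))).ncard ≤ a.ncard + (⋃₀ (G' : Set (Set α))).ncard :=
            Set.ncard_union_le _ _
        _ ≤ q + G'.card * q := by
            have h1 := ih (fun x hx => hG x (Finset.mem_insert_of_mem hx))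
            have h2 := hG a (Finset.mem_insert_self a G')
            omega
        _ = (G'.card + 1) * q := by ring
  have hF : F.Finite := Set.toFinite F
  have h1 := key hF.toFinset (by intro a ha; exact h a (hF.mem_toFinset.mp ha))
  rwa [Set.Finite.coe_toFinset, ← Set.ncard_eq_toFinset_card F hF] at h1

lemma nat_div_add_div_le (a b d : ℕ) (hd : 0 < d) : a / d + b / d ≤ (a + b) / d := by
  rw [Nat.le_div_iff_mul_le hd, add_mul]
  exact add_le_add (Nat.div_mul_le_self a d) (Nat.div_mul_le_self b d)

lemma nat_sum_div_le (I : Finset ℕ) (f : ℕ → ℕ) (d : ℕ) (hd : 0 < d) :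
    ∑ i ∈ I, f i / d ≤ (∑ i ∈ I, f i) / d := by
  classical
  induction I using Finset.induction_on with
  | empty => simp
  | insert _ _ h ih =>
    rename_i a I'
    rw [Finset.sum_insert h, Finset.sum_insert h]
    exact le_trans (by omega) (nat_div_add_div_le (f a) (∑ i ∈ I', f i) d hd)

lemma step_mono (k d : ℕ) (hd : 0 < d) : ∀ u v : ℕ, u ≤ v → u + (k - u) / d ≤ v + (k - v) / d := by
  intro u v huv
  induction v, huv using Nat.le_induction with
  | base => rfl
  | succ v hv ih =>
    refine le_trans ih ?_
    have h1 : (k - v) ≤ (k - (v + 1)) + d := by omega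
    have h2 : (k - v) / d ≤ ((k - (v + 1)) + d) / d := Nat.div_le_div_right h1
    rw [Nat.add_div_right _ hd] at h2
    omega

/-- Key counting estimate for the cover sizes. -/
lemma sum_ceil_le (I : Finset ℕ) (m : ℕ → ℕ) (k b d l : ℕ) (hd : 0 < d)
    (h1 : ∀ i ∈ I, 1 ≤ m i) (h2 : ∑ i ∈ I, m i ≤ k) (h3 : I.card ≤ b) (h4 : b ≤ k)
    (hC : b + (k - b) / d ≤ l) : ∑ i ∈ I, (m i + (d - 1)) / d ≤ l := by
  have key : ∀ i ∈ I, (m i + (d - 1)) / d = 1 + (m i - 1) / d := by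
    intro i hi
    have hm := h1 i hi
    have e : m i + (d - 1) = (m i - 1) + d := by omega
    rw [e, Nat.add_div_right _ hd]
    omega
  rw [Finset.sum_congr rfl key, Finset.sum_add_distrib, Finset.sum_const, smul_eq_mul, mul_one]
  have e2 : ∑ i ∈ I, (m i - 1) / d ≤ (∑ i ∈ I, (m i - 1)) / d := nat_sum_div_le I _ d hd
  have e3 : ∑ i ∈ I, (m i - 1) + I.card = ∑ i ∈ I, m i := by
    calc ∑ i ∈ I, (m i - 1) + I.card = ∑ i ∈ I, ((m i - 1) + 1) := by
          rw [Finset.sum_add_distrib, Finset.sum_const, smul_eq_mul, mul_one]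
      _ = ∑ i ∈ I, m i := Finset.sum_congr rfl (fun i hi => by have := h1 i hi; omega)
  have e4 : ∑ i ∈ I, (m i - 1) ≤ k - I.card := by omega
  have e5 : (∑ i ∈ I, (m i - 1)) / d ≤ (k - I.card) / d := Nat.div_le_div_right e4
  have e6 : I.card + (k - I.card) / d ≤ b + (k - b) / d := step_mono k d hd _ _ h3
  omega

/-- Grouping lemma: in a blob of `c = r + s` vertices where any `d` edges share a common
vertex, any `m` edges can be covered by `⌈m/d⌉` vertices. -/
lemma group_cover {N : ℕ} (r s c d : ℕ) (hc : c = r + s) (hd : 0 < d) (hds : d * s < c)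
    (copy : Set (Fin N)) (hcopy : copy.ncard = c) :
    ∀ m : ℕ, ∀ S : Set (Set (Fin N)), S.ncard = m →
      (∀ e ∈ S, e ⊆ copy ∧ e.ncard = r) →
      ∃ T : Set (Fin N), T.ncard ≤ (m + (d - 1)) / d ∧ IsCover S T := by
  intro m
  induction m using Nat.strong_induction_on with
  | _ m IH =>
    intro S hSm hSe
    rcases Nat.eq_zero_or_pos m with hm | hm
    · subst hm
      have : S = ∅ := (Set.ncard_eq_zero (Set.toFinite S)).mp hSm
      refine ⟨∅, by simp, ?_⟩
      rw [this]
      exact fun e he => absurd he (Set.notMem_empty e)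
    · -- pick min d m edges with a common vertex
      set m' := min d m with hm'def
      have hm'1 : 1 ≤ m' := by omega
      obtain ⟨S₀, hS₀sub, hS₀card⟩ := Set.exists_subset_card_eq
        (show m' ≤ S.ncard by rw [hSm]; exact min_le_right d m)
      -- the complements within the blob
      set A : Set (Set (Fin N)) := (fun e => copy \ e) '' S₀ with hAdef
      have hAsmall : ∀ a ∈ A, a.ncard ≤ s := by
        rintro a ⟨e, heS₀, rfl⟩
        have he := hSe e (hS₀sub heS₀)
        rw [Set.ncard_diff he.1, hcopy, he.2]
        omega
      have hAcard : A.ncard ≤ m' := by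
        rw [← hS₀card]
        exact Set.ncard_image_le (Set.toFinite S₀)
      have hU : (⋃₀ A).ncard < c := by
        calc (⋃₀ A).ncard ≤ A.ncard * s := ncard_sUnion_le A s hAsmall
          _ ≤ m' * s := Nat.mul_le_mul_right s hAcard
          _ ≤ d * s := Nat.mul_le_mul_right s (min_le_left d m)
          _ < c := hds
      have hsub2 : copy \ ⋂₀ S₀ ⊆ ⋃₀ A := by
        rintro v ⟨hv1, hv2⟩
        rw [Set.mem_sInter] at hv2
        push_neg at hv2
        obtain ⟨e, heS₀, hve⟩ := hv2
        exact ⟨copy \ e, ⟨e, heS₀, rfl⟩, hv1, hve⟩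
      have hvex : (copy ∩ ⋂₀ S₀).Nonempty := by
        by_contra hcon
        rw [Set.not_nonempty_iff_eq_empty] at hcon
        have : copy ⊆ copy \ ⋂₀ S₀ := by
          intro x hx
          refine ⟨hx, fun hx2 => ?_⟩
          have : x ∈ copy ∩ ⋂₀ S₀ := ⟨hx, hx2⟩
          rw [hcon] at this
          exact this
        have := Set.ncard_le_ncard (this.trans hsub2) (Set.toFinite _)
        omega
      obtain ⟨v, _, hv⟩ := hvex
      rw [Set.mem_sInter] at hv
      -- recurse on the rest
      have hS₁card : (S \ S₀).ncard = m - m' := by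
        rw [Set.ncard_diff hS₀sub, hSm, hS₀card]
      have hrec : m - m' < m := by omega
      obtain ⟨T₁, hT₁card, hT₁cov⟩ := IH (m - m') hrec (S \ S₀) hS₁card
        (fun e he => hSe e he.1)
      refine ⟨insert v T₁, ?_, ?_⟩
      · have hins : (insert v T₁).ncard ≤ T₁.ncard + 1 := Set.ncard_insert_le v T₁
        rcases le_or_gt m d with hcase | hcase
        · -- m' = m
          have : m' = m := by omega
          rw [this] at hT₁card
          simp only [Nat.sub_self, Nat.zero_add] at hT₁card
          have : T₁.ncard = 0 := by
            have : (d - 1) / d = 0 := Nat.div_eq_of_lt (by omega)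
            omega
          have hgoal : 1 ≤ (m + (d - 1)) / d := by
            rw [Nat.le_div_iff_mul_le hd]
            omega
          omega
        · -- m' = d
          have hm'd : m' = d := by omega
          have he : m + (d - 1) = (m - m' + (d - 1)) + d := by omega
          rw [he, Nat.add_div_right _ hd]
          omega
      · intro e he
        by_cases heS₀ : e ∈ S₀
        · exact ⟨v, hv e heS₀, Set.mem_insert v T₁⟩
        · obtain ⟨x, hx1, hx2⟩ := hT₁cov e ⟨he, heS₀⟩
          exact ⟨x, hx1, Set.mem_insert_of_mem v hx2⟩

/-- The main construction: `b` blobs of `r + s` vertices, edges are all `r`-subsets of blobs. -/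
lemma main_construction (r s d b k l : ℕ) (hr : 2 ≤ r) (hd : 0 < d) (hb : 0 < b)
    (hds : d * s < r + s) (hbk : b ≤ k)
    (hC : b + (k - b) / d ≤ l)
    (hD : r * l ^ 2 ≤ 6 * k * (b * (s + 1))) :
    ∃ (n : ℕ) (E : Set (Set (Fin n))), (∀ e ∈ E, e.ncard = r) ∧
      CoverProperty E k l ∧
      ((r : ℝ) * (l : ℝ) ^ 2 / (6 * (k : ℝ)) ≤ (coverNumber E : ℝ)) := by
  classical
  set c := r + s with hcdef
  have hc : 0 < c := by omega
  have hk : 0 < k := lt_of_lt_of_le hb hbk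
  refine ⟨b * c, copyE r c (b * c), fun e he => he.1, ?_, ?_⟩
  · -- cover property
    intro S hSE hSk
    set Si : ℕ → Set (Set (Fin (b * c))) := fun i => {e ∈ S | e ⊆ copyS c i (b * c)} with hSidef
    have hmem : ∀ e ∈ S, ∃ i, i < b ∧ e ∈ Si i := by
      intro e he
      obtain ⟨hr', i, hi⟩ := hSE he
      have hne : e.Nonempty := Set.nonempty_of_ncard_ne_zero (by rw [hr']; omega)
      obtain ⟨v, hv⟩ := hne
      refine ⟨(v : ℕ) / c, ?_, he, ?_⟩
      · rw [Nat.div_lt_iff_lt_mul hc]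
        exact v.isLt
      · have hvi : (v : ℕ) / c = i := hi hv
        rw [hvi]
        exact hi
    set I : Finset ℕ := (Finset.range b).filter (fun i => (Si i).Nonempty) with hIdef
    have hex : ∀ i : ℕ, ∃ T : Set (Fin (b * c)),
        (i < b → T.ncard ≤ ((Si i).ncard + (d - 1)) / d ∧ IsCover (Si i) T) := by
      intro i
      by_cases hi : i < b
      · obtain ⟨T, h1, h2⟩ := group_cover r s c d hcdef hd hds (copyS c i (b * c))
          (copyS_ncard c i b hc hi) (Si i).ncard (Si i) rfl
          (fun e he => ⟨he.2, (hSE he.1).1⟩)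
        exact ⟨T, fun _ => ⟨h1, h2⟩⟩
      · exact ⟨∅, fun h => absurd h hi⟩
    choose T hT using hex
    refine ⟨⋃ i ∈ I, T i, ?_, ?_⟩
    · calc (⋃ i ∈ I, T i).ncard ≤ ∑ i ∈ I, (T i).ncard := ncard_biUnion_le' I T
        _ ≤ ∑ i ∈ I, ((Si i).ncard + (d - 1)) / d := by
            refine Finset.sum_le_sum (fun i hi => ?_)
            have hib : i < b := Finset.mem_range.mp (Finset.mem_filter.mp hi).1
            exact (hT i hib).1
        _ ≤ l := by
            refine sum_ceil_le I (fun i => (Si i).ncard) k b d l hd ?_ ?_ ?_ hbk hC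
            · intro i hi
              have hne : (Si i).Nonempty := (Finset.mem_filter.mp hi).2
              exact (Set.ncard_pos (Set.toFinite _)).mpr hne
            · refine le_trans (sum_ncard_le I Si S (fun i _ e he => he.1) ?_) hSk
              intro i hi j hj hij e hei hej
              have hne : e.Nonempty := Set.nonempty_of_ncard_ne_zero
                (by rw [(hSE hei.1).1]; omega)
              obtain ⟨v, hv⟩ := hne
              have h1 : (v : ℕ) / c = i := hei.2 hv
              have h2 : (v : ℕ) / c = j := hej.2 hv
              omega
            · calc I.card ≤ (Finset.range b).card := Finset.card_filter_le _ _
                _ = b := Finset.card_range b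
    · intro e he
      obtain ⟨i, hib, hei⟩ := hmem e he
      have hiI : i ∈ I := Finset.mem_filter.mpr ⟨Finset.mem_range.mpr hib, ⟨e, hei⟩⟩
      obtain ⟨x, hx1, hx2⟩ := (hT i hib).2 e hei
      exact ⟨x, hx1, Set.mem_biUnion hiI hx2⟩
  · -- cover number lower bound
    have hlow : ∀ Tc : Set (Fin (b * c)), IsCover (copyE r c (b * c)) Tc →
        b * (s + 1) ≤ Tc.ncard := by
      intro Tc hTc
      have hper : ∀ i ∈ Finset.range b, s + 1 ≤ (Tc ∩ copyS c i (b * c)).ncard := by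
        intro i hi
        rw [Finset.mem_range] at hi
        by_contra hcon
        push_neg at hcon
        have hdiff : r ≤ (copyS c i (b * c) \ Tc).ncard := by
          have h1 : copyS c i (b * c) \ Tc
              = copyS c i (b * c) \ (Tc ∩ copyS c i (b * c)) := by
            ext x; constructor
            · rintro ⟨hx1, hx2⟩; exact ⟨hx1, fun h => hx2 h.1⟩
            · rintro ⟨hx1, hx2⟩; exact ⟨hx1, fun h => hx2 ⟨h, hx1⟩⟩
          rw [h1, Set.ncard_diff Set.inter_subset_right, copyS_ncard c i b hc hi]
          omega
        obtain ⟨e, hesub, hecard⟩ := Set.exists_subset_card_eq hdiff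
        have heE : e ∈ copyE r c (b * c) := ⟨hecard, i, hesub.trans Set.diff_subset⟩
        obtain ⟨x, hx1, hx2⟩ := hTc e heE
        exact (hesub hx1).2 hx2
      calc b * (s + 1) = ∑ _i ∈ Finset.range b, (s + 1) := by
            rw [Finset.sum_const, Finset.card_range, smul_eq_mul, mul_comm]
        _ ≤ ∑ i ∈ Finset.range b, (Tc ∩ copyS c i (b * c)).ncard := Finset.sum_le_sum hper
        _ ≤ Tc.ncard := by
            refine sum_ncard_le _ _ Tc (fun i _ => Set.inter_subset_left) ?_
            intro i _ j _ hij x hxi hxj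
            have h1 : (x : ℕ) / c = i := hxi.2
            have h2 : (x : ℕ) / c = j := hxj.2
            omega
    have hcn : b * (s + 1) ≤ coverNumber (copyE r c (b * c)) := by
      refine le_csInf ?_ ?_
      · refine ⟨(Set.univ : Set (Fin (b * c))).ncard, Set.univ, rfl, fun e he => ?_⟩
        rw [Set.inter_univ]
        exact Set.nonempty_of_ncard_ne_zero (by rw [he.1]; omega)
      · rintro x ⟨Tc, rfl, hTcov⟩
        exact hlow Tc hTcov
    have hnat : r * l ^ 2 ≤ 6 * k * coverNumber (copyE r c (b * c)) :=
      le_trans hD (Nat.mul_le_mul_left (6 * k) hcn)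
    rw [div_le_iff₀ (by positivity)]
    calc (r : ℝ) * (l : ℝ) ^ 2 = ((r * l ^ 2 : ℕ) : ℝ) := by push_cast; ring
      _ ≤ ((6 * k * coverNumber (copyE r c (b * c)) : ℕ) : ℝ) := by exact_mod_cast hnat
      _ = (coverNumber (copyE r c (b * c)) : ℝ) * (6 * (k : ℝ)) := by push_cast; ring

/-- for `k > ℓ`, there is an `r`-uniform hypergraph with the
`(k,ℓ)`-cover property whose cover number is at least `r·ℓ²/(6k)`. -/
theorem stmt12 (r ℓ k : ℕ) (hr : 2 ≤ r) (hl : 1 ≤ ℓ) (hk : ℓ < k) :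
    ∃ (n : ℕ) (E : Set (Set (Fin n))), (∀ e ∈ E, e.ncard = r) ∧
      CoverProperty E k ℓ ∧
      ((r : ℝ) * (ℓ : ℝ) ^ 2 / (6 * (k : ℝ)) ≤ (coverNumber E : ℝ)) := by
  have hk0 : 0 < k := by omega
  rcases le_or_gt (r * ℓ) (6 * k) with hcase | hcase
  · -- ℓ disjoint edges: s = 0, d = k, b = ℓ
    refine main_construction r 0 k ℓ k ℓ hr hk0 (by omega) (by omega) (le_of_lt hk) ?_ ?_
    · have : (k - ℓ) / k = 0 := Nat.div_eq_of_lt (by omega)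
      omega
    · calc r * ℓ ^ 2 = (r * ℓ) * ℓ := by ring
        _ ≤ (6 * k) * ℓ := Nat.mul_le_mul_right ℓ hcase
        _ = 6 * k * (ℓ * (0 + 1)) := by ring
  · -- main case: 6k < rℓ
    set d := 2 * k / ℓ + 1 with hddef
    have hl0 : 0 < ℓ := hl
    have hd2 : 2 ≤ d := by
      have : 1 ≤ 2 * k / ℓ := (Nat.one_le_div_iff hl0).mpr (by omega)
      omega
    have hd0 : 0 < d := by omega
    have hdl : 2 * k ≤ d * ℓ := by
      have h1 : 2 * k < d * ℓ := by
        rw [hddef]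
        exact (Nat.div_lt_iff_lt_mul hl0).mp (Nat.lt_succ_self _)
      omega
    have hdl2 : (d - 1) * ℓ ≤ 2 * k := by
      have h0 : d - 1 = 2 * k / ℓ := by omega
      rw [h0]
      exact Nat.div_mul_le_self _ _
    -- name the quotient k / d
    obtain ⟨q, hq⟩ : ∃ q, q = k / d := ⟨_, rfl⟩
    have hq1 : q * d ≤ k := by rw [hq]; exact Nat.div_mul_le_self k d
    have hq2 : q < ℓ := by
      rw [hq, Nat.div_lt_iff_lt_mul hd0]
      calc k < 2 * k := by omega
        _ ≤ d * ℓ := hdl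
        _ = ℓ * d := mul_comm d ℓ
    have hq3 : 2 * q ≤ ℓ := by
      refine Nat.le_of_mul_le_mul_right ?_ hd0
      calc (2 * q) * d = 2 * (q * d) := by ring
        _ ≤ 2 * k := by omega
        _ ≤ d * ℓ := hdl
        _ = ℓ * d := mul_comm d ℓ
    -- name the quotient (r-1)/(d-1)
    obtain ⟨s, hs1, hs2⟩ : ∃ s, s * (d - 1) ≤ r - 1 ∧ r - 1 < (s + 1) * (d - 1) :=
      ⟨(r - 1) / (d - 1), Nat.div_mul_le_self _ _,
        (Nat.div_lt_iff_lt_mul (by omega)).mp (Nat.lt_succ_self _)⟩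
    set b := ℓ - q with hbdef
    have hb0 : 0 < b := by omega
    have hbk : b ≤ k := by omega
    have hds : d * s < r + s := by
      have hsplit : d * s = s * (d - 1) + s := by
        have h0 : d = (d - 1) + 1 := by omega
        calc d * s = ((d - 1) + 1) * s := by rw [← h0]
          _ = s * (d - 1) + s := by ring
      omega
    have hC : b + (k - b) / d ≤ ℓ := by
      have h1 : (k - b) / d ≤ k / d := Nat.div_le_div_right (Nat.sub_le k b)
      rw [← hq] at h1
      omega
    have hD : r * ℓ ^ 2 ≤ 6 * k * (b * (s + 1)) := by
      have fact1 : ℓ ≤ 2 * b := by omega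
      have fact2 : r ≤ (s + 1) * (d - 1) := by omega
      have fact3 : r * ℓ ≤ (s + 1) * (2 * k) := by
        calc r * ℓ ≤ ((s + 1) * (d - 1)) * ℓ := Nat.mul_le_mul_right ℓ fact2
          _ = (s + 1) * ((d - 1) * ℓ) := by ring
          _ ≤ (s + 1) * (2 * k) := Nat.mul_le_mul_left _ hdl2
      calc r * ℓ ^ 2 = (r * ℓ) * ℓ := by ring
        _ ≤ ((s + 1) * (2 * k)) * ℓ := Nat.mul_le_mul_right ℓ fact3
        _ ≤ ((s + 1) * (2 * k)) * (2 * b) := Nat.mul_le_mul_left _ fact1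
        _ = 4 * k * (b * (s + 1)) := by ring
        _ ≤ 6 * k * (b * (s + 1)) := Nat.mul_le_mul_right _ (by omega)
    exact main_construction r s d b k ℓ hr hd0 hb0 hds hbk hC hD
end

section
/- Let r ≥ 2 be an integer and let k be an integer with k < binomial(r, ⌊(r+1)/2⌋) + binomial(r, ⌈(r+1)/2⌉). Then there exists an r-partite r-graph satisfying the (r,k)-cover property whose cover number is greater than r. -/
noncomputable section Stmt15Aux
open Classical

namespace Stmt15

/-- `h r = ⌈(r+1)/2⌉`. -/
abbrev hf (r : ℕ) : ℕ := (r+2)/2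

/-- Vertex type: each part `i` has two "hub" vertices `(i, .inl b)` and
private vertices `(i, .inr A)`. -/
abbrev V (r : ℕ) := Fin r × (Bool ⊕ Finset (Fin (r+1)))

/-- The vertex of the edge indexed by `A` lying in part `i`. -/
def vert (r : ℕ) (A : Finset (Fin (r+1))) (i : Fin r) : V r :=
  if Fin.last r ∈ A ∧ i.castSucc ∉ A then (i, Sum.inl false)
  else if Fin.last r ∉ A ∧ i.castSucc ∈ A then (i, Sum.inl true)
  else (i, Sum.inr A)

def edge (r : ℕ) (A : Finset (Fin (r+1))) : Set (V r) := Set.range (vert r A)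

/-- The edge set: one edge for each `hf r`-subset of `Fin (r+1)`. -/
def EV (r : ℕ) : Set (Set (V r)) := {e | ∃ A : Finset (Fin (r+1)), A.card = hf r ∧ e = edge r A}

lemma vert_fst (r : ℕ) (A : Finset (Fin (r+1))) (i : Fin r) : (vert r A i).1 = i := by
  unfold vert
  split_ifs <;> rfl

lemma vert_eq_inr (r : ℕ) {A : Finset (Fin (r+1))} {i : Fin r} {B : Finset (Fin (r+1))}
    (hv : (vert r A i).2 = Sum.inr B) : A = B := by
  unfold vert at hv
  split_ifs at hv <;> simp_all

lemma edge_inter_part (r : ℕ) (A : Finset (Fin (r+1))) (i : Fin r) :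
    edge r A ∩ {v : V r | v.1 = i} = {vert r A i} := by
  ext v
  simp only [edge, Set.mem_inter_iff, Set.mem_range, Set.mem_setOf_eq, Set.mem_singleton_iff]
  constructor
  · rintro ⟨⟨j, rfl⟩, hj⟩
    rw [vert_fst] at hj; subst hj; rfl
  · rintro rfl
    exact ⟨⟨i, rfl⟩, vert_fst r A i⟩

/-- The transversal that misses only the edge `A₀`. -/
def uT (r : ℕ) (A₀ : Finset (Fin (r+1))) (i : Fin r) : V r :=
  (i, Sum.inl (if i.castSucc ∈ A₀ then false else true))

lemma uT_fst (r : ℕ) (A₀ : Finset (Fin (r+1))) (i : Fin r) : (uT r A₀ i).1 = i := rfl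

lemma uT_covers (r : ℕ) {A₀ A : Finset (Fin (r+1))} (hcard : A.card = A₀.card) (hne : A ≠ A₀) :
    ∃ i : Fin r, vert r A i = uT r A₀ i := by
  by_cases hs : Fin.last r ∈ A
  · have hnsub : ¬ A₀ ⊆ A := fun hsub => hne (Finset.eq_of_subset_of_card_le hsub hcard.le).symm
    obtain ⟨x, hxA₀, hxA⟩ := Finset.not_subset.mp hnsub
    have hxlast : x ≠ Fin.last r := fun hh => hxA (hh ▸ hs)
    obtain ⟨i, rfl⟩ := Fin.exists_castSucc_eq.mpr hxlast
    refine ⟨i, ?_⟩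
    unfold vert uT
    rw [if_pos ⟨hs, hxA⟩, if_pos hxA₀]
  · have hnsub : ¬ A ⊆ A₀ := fun hsub => hne (Finset.eq_of_subset_of_card_le hsub hcard.ge)
    obtain ⟨x, hxA, hxA₀⟩ := Finset.not_subset.mp hnsub
    have hxlast : x ≠ Fin.last r := fun hh => hs (hh ▸ hxA)
    obtain ⟨i, rfl⟩ := Fin.exists_castSucc_eq.mpr hxlast
    refine ⟨i, ?_⟩
    unfold vert uT
    rw [if_neg (by tauto), if_pos ⟨hs, hxA⟩, if_neg hxA₀]

lemma choose_lb {n k : ℕ} (h1 : 1 ≤ k) (h2 : k ≤ n) : n + 1 - k ≤ n.choose k := by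
  rw [← Nat.choose_symm h2]
  have e1 : n + 1 - k = (n - k) + 1 := by omega
  have e2 : ((n-k)+1).choose (n-k) = (n-k)+1 := Nat.choose_succ_self_right _
  rw [e1, ← e2]
  exact Nat.choose_le_choose _ (by omega)

set_option maxHeartbeats 1000000 in
lemma main_cover (r : ℕ) (hr : 2 ≤ r) (T : Set (V r)) (hT : T.ncard ≤ r) :
    ∃ A : Finset (Fin (r+1)), A.card = hf r ∧ edge r A ∩ T = ∅ := by
  have hfacts : 2 ≤ hf r ∧ hf r ≤ r ∧ 2 * hf r ≤ r + 2 ∧ r + 1 ≤ 2 * hf r := by unfold hf; omega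
  obtain ⟨hh2, hhr, h2h, hr2h⟩ := hfacts
  have hfin : T.Finite := Set.toFinite T
  set Tf := hfin.toFinset with hTfdef
  have hTcard : Tf.card ≤ r := by
    rw [← Set.ncard_eq_toFinset_card T hfin]; exact hT
  set W0 : Finset (Fin r) := Finset.univ.filter (fun i => ((i, Sum.inl false) : V r) ∈ T) with hW0def
  set W1 : Finset (Fin r) := Finset.univ.filter (fun i => ((i, Sum.inl true) : V r) ∈ T) with hW1def
  set Pv : Finset (V r) := Tf.filter (fun v => ∃ B, v.2 = Sum.inr B) with hPvdef
  set a := W0.card with hadef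
  set b := W1.card with hbdef
  set σ := Pv.card with hσdef
  -- budget
  have hbudget : a + b + σ ≤ r := by
    have h0 : W0.image (fun i => ((i, Sum.inl false) : V r)) ⊆
        Tf.filter (fun v => v.2 = Sum.inl false) := by
      intro v hv
      simp only [Finset.mem_image] at hv
      obtain ⟨i, hi, rfl⟩ := hv
      simp only [Finset.mem_filter, hW0def, Finset.mem_univ, true_and] at hi ⊢
      exact ⟨hfin.mem_toFinset.mpr hi, trivial⟩
    have h1 : W1.image (fun i => ((i, Sum.inl true) : V r)) ⊆
        Tf.filter (fun v => v.2 = Sum.inl true) := by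
      intro v hv
      simp only [Finset.mem_image] at hv
      obtain ⟨i, hi, rfl⟩ := hv
      simp only [Finset.mem_filter, hW1def, Finset.mem_univ, true_and] at hi ⊢
      exact ⟨hfin.mem_toFinset.mpr hi, trivial⟩
    have ha' : a ≤ (Tf.filter (fun v => v.2 = Sum.inl false)).card := by
      have himg := Finset.card_image_of_injective (f := fun i => ((i, Sum.inl false) : V r)) W0
        (fun i j hij => by simpa using hij)
      rw [hadef, ← himg]
      exact Finset.card_le_card h0
    have hb' : b ≤ (Tf.filter (fun v => v.2 = Sum.inl true)).card := by
      have himg := Finset.card_image_of_injective (f := fun i => ((i, Sum.inl true) : V r)) W1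
        (fun i j hij => by simpa using hij)
      rw [hbdef, ← himg]
      exact Finset.card_le_card h1
    have hdisj01 : Disjoint (Tf.filter (fun v => v.2 = Sum.inl false))
        (Tf.filter (fun v => v.2 = Sum.inl true)) := by
      rw [Finset.disjoint_left]
      intro v hv hv'
      simp only [Finset.mem_filter] at hv hv'
      rw [hv.2] at hv'; simp at hv'
    have hdisj2 : Disjoint ((Tf.filter (fun v => v.2 = Sum.inl false)) ∪
        (Tf.filter (fun v => v.2 = Sum.inl true))) Pv := by
      rw [Finset.disjoint_left]
      intro v hv hv'
      simp only [Finset.mem_union, Finset.mem_filter, hPvdef] at hv hv'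
      obtain ⟨B, hB⟩ := hv'.2
      rcases hv with hv | hv <;> rw [hv.2] at hB <;> simp at hB
    have hsub : ((Tf.filter (fun v => v.2 = Sum.inl false)) ∪
        (Tf.filter (fun v => v.2 = Sum.inl true))) ∪ Pv ⊆ Tf := by
      intro v hv
      simp only [Finset.mem_union, Finset.mem_filter, hPvdef] at hv
      rcases hv with (hv | hv) | hv <;> exact hv.1
    have := Finset.card_le_card hsub
    rw [Finset.card_union_of_disjoint hdisj2, Finset.card_union_of_disjoint hdisj01] at this
    omega
  -- candidate sets
  set W0i := W0.image Fin.castSucc with hW0idef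
  set W1i := W1.image Fin.castSucc with hW1idef
  have hW0icard : W0i.card = a := Finset.card_image_of_injective _ (Fin.castSucc_injective r)
  have hW1icard : W1i.card = b := Finset.card_image_of_injective _ (Fin.castSucc_injective r)
  have hlast0 : Fin.last r ∉ W0i := by
    simp only [hW0idef, Finset.mem_image]
    rintro ⟨i, _, hi⟩
    exact (Fin.castSucc_lt_last i).ne hi
  have hlast1 : Fin.last r ∉ W1i := by
    simp only [hW1idef, Finset.mem_image]
    rintro ⟨i, _, hi⟩
    exact (Fin.castSucc_lt_last i).ne hi
  set X := insert (Fin.last r) W0i with hXdef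
  have hXcard : X.card = a + 1 := by
    rw [hXdef, Finset.card_insert_of_notMem hlast0, hW0icard]
  set Ω₁ := (Finset.univ : Finset (Fin (r+1))) \ X with hΩ₁def
  set Ω₂ := (Finset.univ : Finset (Fin (r+1))) \ insert (Fin.last r) W1i with hΩ₂def
  have hΩ₁card : Ω₁.card = r - a := by
    rw [hΩ₁def, Finset.card_sdiff_of_subset (Finset.subset_univ _), hXcard]
    simp [Fintype.card_fin]
  have hΩ₂card : Ω₂.card = r - b := by
    rw [hΩ₂def, Finset.card_sdiff_of_subset (Finset.subset_univ _),
      Finset.card_insert_of_notMem hlast1, hW1icard]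
    simp [Fintype.card_fin]
  set c1 := (Ω₁.powersetCard (hf r - 1 - a)).image (fun C => C ∪ X) with hc1def
  set c2 := Ω₂.powersetCard (hf r) with hc2def
  -- goodness
  have hG1 : a + 1 ≤ hf r → ∀ A ∈ c1, A.card = hf r ∧
      (Fin.last r ∈ A ∧ ∀ i ∈ W0, i.castSucc ∈ A) := by
    intro ha A hA
    simp only [hc1def, Finset.mem_image] at hA
    obtain ⟨C, hC, rfl⟩ := hA
    rw [Finset.mem_powersetCard] at hC
    have hdisj : Disjoint C X :=
      Finset.disjoint_of_subset_left hC.1 Finset.sdiff_disjoint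
    constructor
    · rw [Finset.card_union_of_disjoint hdisj, hC.2, hXcard]
      omega
    · constructor
      · exact Finset.mem_union_right _ (Finset.mem_insert_self _ _)
      · intro i hi
        exact Finset.mem_union_right _ (Finset.mem_insert_of_mem
          (Finset.mem_image_of_mem _ hi))
  have hG2 : ∀ A ∈ c2, A.card = hf r ∧
      (Fin.last r ∉ A ∧ ∀ i ∈ W1, i.castSucc ∉ A) := by
    intro A hA
    rw [hc2def, Finset.mem_powersetCard] at hA
    refine ⟨hA.2, ?_, ?_⟩
    · intro hmem
      have := hA.1 hmem
      rw [hΩ₂def, Finset.mem_sdiff] at this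
      exact this.2 (Finset.mem_insert_self _ _)
    · intro i hi hmem
      have := hA.1 hmem
      rw [hΩ₂def, Finset.mem_sdiff] at this
      exact this.2 (Finset.mem_insert_of_mem (Finset.mem_image_of_mem _ hi))
  have hc1card : a + 1 ≤ hf r → hf r ≤ c1.card + a := by
    intro ha
    have hinj : Set.InjOn (fun C => C ∪ X) (Ω₁.powersetCard (hf r - 1 - a)) := by
      intro C hC C' hC' heq
      rw [Finset.mem_coe, Finset.mem_powersetCard] at hC hC'
      ext x
      constructor
      · intro hx
        have heq' : C ∪ X = C' ∪ X := heq
        have hxu : x ∈ C' ∪ X := heq' ▸ Finset.mem_union_left _ hx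
        rcases Finset.mem_union.mp hxu with hx' | hx'
        · exact hx'
        · exact absurd hx' (by have := hC.1 hx; rw [hΩ₁def, Finset.mem_sdiff] at this; exact this.2)
      · intro hx
        have heq' : C ∪ X = C' ∪ X := heq
        have hxu : x ∈ C ∪ X := heq'.symm ▸ Finset.mem_union_left _ hx
        rcases Finset.mem_union.mp hxu with hx' | hx'
        · exact hx'
        · exact absurd hx' (by have := hC'.1 hx; rw [hΩ₁def, Finset.mem_sdiff] at this; exact this.2)
    have hcard : c1.card = (r - a).choose (hf r - 1 - a) := by
      rw [hc1def, Finset.card_image_of_injOn hinj, Finset.card_powersetCard, hΩ₁card]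
    rw [hcard]
    by_cases hk : hf r - 1 - a = 0
    · rw [hk, Nat.choose_zero_right]; omega
    · have hb1 : (r - a) + 1 - (hf r - 1 - a) ≤ (r - a).choose (hf r - 1 - a) :=
        choose_lb (by omega) (by omega)
      omega
  have hc2card : b ≤ r - hf r → r + 1 - hf r ≤ c2.card + b := by
    intro hb
    have hcard : c2.card = (r - b).choose (hf r) := by
      rw [hc2def, Finset.card_powersetCard, hΩ₂card]
    rw [hcard]
    have hb1 : (r - b) + 1 - hf r ≤ (r - b).choose (hf r) := choose_lb (by omega) (by omega)
    omega
  -- the pool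
  have hpool : ∃ P : Finset (Finset (Fin (r+1))), σ < P.card ∧ ∀ A ∈ P, A.card = hf r ∧
      ((Fin.last r ∈ A ∧ ∀ i ∈ W0, i.castSucc ∈ A) ∨
       (Fin.last r ∉ A ∧ ∀ i ∈ W1, i.castSucc ∉ A)) := by
    by_cases ha : a + 1 ≤ hf r
    · by_cases hb : b ≤ r - hf r
      · refine ⟨c1 ∪ c2, ?_, ?_⟩
        · have hdisj : Disjoint c1 c2 := by
            rw [Finset.disjoint_left]
            intro A hA hA'
            exact (hG2 A hA').2.1 (hG1 ha A hA).2.1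
          rw [Finset.card_union_of_disjoint hdisj]
          have := hc1card ha
          have := hc2card hb
          omega
        · intro A hA
          rcases Finset.mem_union.mp hA with hA | hA
          · exact ⟨(hG1 ha A hA).1, Or.inl (hG1 ha A hA).2⟩
          · exact ⟨(hG2 A hA).1, Or.inr (hG2 A hA).2⟩
      · refine ⟨c1, ?_, fun A hA => ⟨(hG1 ha A hA).1, Or.inl (hG1 ha A hA).2⟩⟩
        have := hc1card ha
        omega
    · have hb : b ≤ r - hf r := by omega
      refine ⟨c2, ?_, fun A hA => ⟨(hG2 A hA).1, Or.inr (hG2 A hA).2⟩⟩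
      have := hc2card hb
      omega
  obtain ⟨P, hPcard, hPG⟩ := hpool
  -- killed candidates
  classical
  set K := P.filter (fun A => ∃ i : Fin r, ((i, Sum.inr A) : V r) ∈ T) with hKdef
  have hi0 : (0 : ℕ) < r := by omega
  have hKcard : K.card ≤ σ := by
    have hmaps : ∀ A ∈ K, (if hx : ∃ i : Fin r, ((i, Sum.inr A) : V r) ∈ T then
        ((hx.choose, Sum.inr A) : V r) else ((⟨0, hi0⟩ : Fin r), Sum.inl false)) ∈ Pv := by
      intro A hA
      rw [hKdef, Finset.mem_filter] at hA
      rw [dif_pos hA.2]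
      rw [hPvdef, Finset.mem_filter]
      exact ⟨hfin.mem_toFinset.mpr hA.2.choose_spec, ⟨A, rfl⟩⟩
    have hinj : ∀ A ∈ K, ∀ A' ∈ K,
        (if hx : ∃ i : Fin r, ((i, Sum.inr A) : V r) ∈ T then
          ((hx.choose, Sum.inr A) : V r) else ((⟨0, hi0⟩ : Fin r), Sum.inl false)) =
        (if hx : ∃ i : Fin r, ((i, Sum.inr A') : V r) ∈ T then
          ((hx.choose, Sum.inr A') : V r) else ((⟨0, hi0⟩ : Fin r), Sum.inl false)) → A = A' := by
      intro A hA A' hA' heq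
      rw [hKdef, Finset.mem_filter] at hA hA'
      rw [dif_pos hA.2, dif_pos hA'.2] at heq
      have := congrArg Prod.snd heq
      simpa using this
    exact Finset.card_le_card_of_injOn _ hmaps hinj
  have hexA : ∃ A ∈ P, A ∉ K := by
    by_contra hcon
    push_neg at hcon
    have : P ⊆ K := hcon
    have := Finset.card_le_card this
    omega
  obtain ⟨A, hAP, hAK⟩ := hexA
  obtain ⟨hAcard, hAgood⟩ := hPG A hAP
  refine ⟨A, hAcard, ?_⟩
  have hnopriv : ∀ i : Fin r, ((i, Sum.inr A) : V r) ∉ T := by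
    intro i hi
    exact hAK (by rw [hKdef, Finset.mem_filter]; exact ⟨hAP, ⟨i, hi⟩⟩)
  ext v
  simp only [Set.mem_inter_iff, Set.mem_empty_iff_false, iff_false, not_and]
  rintro ⟨i, rfl⟩ hvT
  rcases hAgood with ⟨hs, hw0⟩ | ⟨hs, hw1⟩
  · by_cases hi : i.castSucc ∈ A
    · have hv : vert r A i = (i, Sum.inr A) := by
        unfold vert
        rw [if_neg (fun hc => hc.2 hi), if_neg (fun hc => hc.1 hs)]
      rw [hv] at hvT
      exact hnopriv i hvT
    · have hv : vert r A i = (i, Sum.inl false) := by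
        unfold vert
        rw [if_pos ⟨hs, hi⟩]
      rw [hv] at hvT
      have hiW0 : i ∈ W0 := by
        rw [hW0def, Finset.mem_filter]
        exact ⟨Finset.mem_univ _, hvT⟩
      exact hi (hw0 i hiW0)
  · by_cases hi : i.castSucc ∈ A
    · have hv : vert r A i = (i, Sum.inl true) := by
        unfold vert
        rw [if_neg (fun hc => hs hc.1), if_pos ⟨hs, hi⟩]
      rw [hv] at hvT
      have hiW1 : i ∈ W1 := by
        rw [hW1def, Finset.mem_filter]
        exact ⟨Finset.mem_univ _, hvT⟩
      exact hw1 i hiW1 hi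
    · have hv : vert r A i = (i, Sum.inr A) := by
        unfold vert
        rw [if_neg (fun hc => hs hc.1), if_neg (fun hc => hi hc.2)]
      rw [hv] at hvT
      exact hnopriv i hvT


lemma exists_private (r : ℕ) (hr : 2 ≤ r) {A : Finset (Fin (r+1))} (hA : A.card = hf r) :
    (∃ i : Fin r, vert r A i = (i, Sum.inr A)) ∨
    (Fin.last r ∉ A ∧ ∀ i : Fin r, i.castSucc ∈ A) := by
  have hh2 : 2 ≤ hf r := by unfold hf; omega
  by_cases hs : Fin.last r ∈ A
  · left
    obtain ⟨x, hxA, hxs⟩ := Finset.exists_mem_ne (s := A) (by rw [hA]; omega) (Fin.last r)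
    obtain ⟨i, rfl⟩ := Fin.exists_castSucc_eq.mpr hxs
    refine ⟨i, ?_⟩
    unfold vert
    rw [if_neg (fun hc => hc.2 hxA), if_neg (fun hc => hc.1 hs)]
  · by_cases hall : ∀ i : Fin r, i.castSucc ∈ A
    · exact Or.inr ⟨hs, hall⟩
    · left
      push_neg at hall
      obtain ⟨i, hi⟩ := hall
      refine ⟨i, ?_⟩
      unfold vert
      rw [if_neg (fun hc => hs hc.1), if_neg (fun hc => hi hc.2)]

lemma edge_inj (r : ℕ) (hr : 2 ≤ r) {A B : Finset (Fin (r+1))} (hA : A.card = hf r)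
    (hB : B.card = hf r) (he : edge r A = edge r B) : A = B := by
  have key : ∀ (C D : Finset (Fin (r+1))), edge r C = edge r D →
      (∃ i : Fin r, vert r C i = (i, Sum.inr C)) → C = D := by
    intro C D hCD ⟨i, hvi⟩
    have hmem : ((i, Sum.inr C) : V r) ∈ edge r D := by
      rw [← hCD]; exact ⟨i, hvi⟩
    obtain ⟨j, hj⟩ := hmem
    have hji : j = i := by
      have h1 := vert_fst r D j
      rw [hj] at h1
      exact h1.symm
    subst hji
    have : (vert r D j).2 = Sum.inr C := by rw [hj]
    exact (vert_eq_inr r this).symm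
  rcases exists_private r hr hA with hp | ⟨hsA, hallA⟩
  · exact key A B he hp
  · rcases exists_private r hr hB with hp | ⟨hsB, hallB⟩
    · exact (key B A he.symm hp).symm
    · have himg : ((Finset.univ : Finset (Fin r)).image Fin.castSucc).card = r := by
        rw [Finset.card_image_of_injective _ (Fin.castSucc_injective r)]
        simp
      have hsubA : (Finset.univ : Finset (Fin r)).image Fin.castSucc ⊆ A := by
        intro x hx
        obtain ⟨i, _, rfl⟩ := Finset.mem_image.mp hx
        exact hallA i
      have hsubB : (Finset.univ : Finset (Fin r)).image Fin.castSucc ⊆ B := by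
        intro x hx
        obtain ⟨i, _, rfl⟩ := Finset.mem_image.mp hx
        exact hallB i
      have hA' : A = (Finset.univ : Finset (Fin r)).image Fin.castSucc :=
        (Finset.eq_of_subset_of_card_le hsubA (by rw [himg, hA]; unfold hf; omega)).symm
      have hB' : B = (Finset.univ : Finset (Fin r)).image Fin.castSucc :=
        (Finset.eq_of_subset_of_card_le hsubB (by rw [himg, hB]; unfold hf; omega)).symm
      rw [hA', hB']

lemma binom_split (r : ℕ) (hr : 2 ≤ r) :
    r.choose ((r+1)/2) + r.choose ((r+2)/2) = (r+1).choose (hf r) := by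
  obtain ⟨m, hm⟩ : ∃ m, hf r = m + 1 := ⟨hf r - 1, by unfold hf; omega⟩
  have hsplit : (r+1).choose (hf r) = r.choose m + r.choose (m+1) := by
    rw [hm]; exact Nat.choose_succ_succ r m
  rw [hsplit]
  have hh : (r+2)/2 = m + 1 := hm
  rcases Nat.even_or_odd r with ⟨t, ht⟩ | ⟨t, ht⟩
  · have h1 : (r+1)/2 = m := by omega
    rw [h1, hh]
  · have h1 : (r+1)/2 = m + 1 := by omega
    have h2 : r - (m+1) = m := by omega
    have h3 : r.choose m = r.choose (m+1) := by
      conv_lhs => rw [← h2]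
      rw [Nat.choose_symm (by omega)]
    rw [h1, hh, h3]

end Stmt15

end Stmt15Aux

/-- for `k < C(r, ⌊(r+1)/2⌋) + C(r, ⌈(r+1)/2⌉)`, there is an
`r`-partite `r`-graph with the `(r,k)`-cover property whose cover number exceeds `r`. -/

theorem stmt15 (r k : ℕ) (hr : 2 ≤ r)
    (hk : k < r.choose ((r + 1) / 2) + r.choose ((r + 2) / 2)) :
    ∃ (n : ℕ) (part : Fin n → Fin r) (E : Set (Set (Fin n))),
      IsPartite r part E ∧ PartiteCoverProperty r part E k ∧ r < coverNumber E := by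
  classical
  have hkN : k < (r+1).choose (Stmt15.hf r) := by
    rw [← Stmt15.binom_split r hr]; exact hk
  set n := Fintype.card (Stmt15.V r) with hn
  set eqv : Stmt15.V r ≃ Fin n := Fintype.equivFin (Stmt15.V r) with heqv
  set part : Fin n → Fin r := fun x => (eqv.symm x).1 with hpart
  set E : Set (Set (Fin n)) := (fun e0 => eqv '' e0) '' (Stmt15.EV r) with hE
  have hpartpre : ∀ (e0 : Set (Stmt15.V r)) (i : Fin r),
      (eqv '' e0) ∩ part ⁻¹' {i} = eqv '' (e0 ∩ {v | v.1 = i}) := by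
    intro e0 i
    ext x
    constructor
    · rintro ⟨⟨v, hv, rfl⟩, hx⟩
      refine ⟨v, ⟨hv, ?_⟩, rfl⟩
      simp only [Set.mem_preimage, Set.mem_singleton_iff, hpart, Equiv.symm_apply_apply] at hx
      exact hx
    · rintro ⟨v, ⟨hv, hvi⟩, rfl⟩
      refine ⟨⟨v, hv, rfl⟩, ?_⟩
      simp only [Set.mem_preimage, Set.mem_singleton_iff, hpart, Equiv.symm_apply_apply]
      exact hvi
  refine ⟨n, part, E, ?_, ?_, ?_⟩
  · -- IsPartite
    rintro e ⟨e0, ⟨A, hA, rfl⟩, rfl⟩ i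
    rw [hpartpre, Stmt15.edge_inter_part, Set.image_singleton]
    exact Set.ncard_singleton _
  · -- PartiteCoverProperty
    intro S hSE hScard
    have hmiss : ∃ A₀ : Finset (Fin (r+1)), A₀.card = Stmt15.hf r ∧
        (eqv '' Stmt15.edge r A₀) ∉ S := by
      by_contra hcon
      push_neg at hcon
      set F := (Finset.univ.powersetCard (Stmt15.hf r)).image
        (fun A : Finset (Fin (r+1)) => eqv '' Stmt15.edge r A) with hF
      have hFsub : ↑F ⊆ S := by
        intro e he
        simp only [hF, Finset.coe_image, Set.mem_image, Finset.mem_coe,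
          Finset.mem_powersetCard] at he
        obtain ⟨A, ⟨_, hAcard⟩, rfl⟩ := he
        exact hcon A hAcard
      have hFcard : F.card = (r+1).choose (Stmt15.hf r) := by
        rw [hF, Finset.card_image_of_injOn, Finset.card_powersetCard]
        · simp
        · intro A hA B hB hAB
          rw [Finset.mem_coe, Finset.mem_powersetCard] at hA hB
          have hAB' : Stmt15.edge r A = Stmt15.edge r B :=
            Set.image_injective.mpr eqv.injective hAB
          exact Stmt15.edge_inj r hr hA.2 hB.2 hAB'
      have hEVfin : (Stmt15.EV r).Finite := by
        refine Set.Finite.subset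
          (Finset.finite_toSet ((Finset.univ.powersetCard (Stmt15.hf r)).image (Stmt15.edge r))) ?_
        rintro e ⟨A, hA, rfl⟩
        simp only [Finset.coe_image, Set.mem_image, Finset.mem_coe, Finset.mem_powersetCard]
        exact ⟨A, ⟨Finset.subset_univ _, hA⟩, rfl⟩
      have hSfin : S.Finite := ((hEVfin.image _).subset hSE)
      have hcount : F.card ≤ S.ncard := by
        rw [← Set.ncard_coe_finset F]
        exact Set.ncard_le_ncard hFsub hSfin
      omega
    obtain ⟨A₀, hA₀card, hA₀S⟩ := hmiss
    refine ⟨eqv '' Set.range (Stmt15.uT r A₀), ?_, ?_⟩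
    · -- covers S
      rintro e heS
      obtain ⟨e0, ⟨A, hAcard, rfl⟩, rfl⟩ := hSE heS
      have hAne : A ≠ A₀ := by
        rintro rfl
        exact hA₀S heS
      obtain ⟨i, hi⟩ := Stmt15.uT_covers r (hAcard.trans hA₀card.symm) hAne
      refine ⟨eqv (Stmt15.vert r A i), ⟨Stmt15.vert r A i, ⟨i, rfl⟩, rfl⟩, ?_⟩
      exact ⟨Stmt15.uT r A₀ i, ⟨i, rfl⟩, by rw [← hi]⟩
    · -- exactly one vertex per part
      intro i
      rw [hpartpre]
      have hone : Set.range (Stmt15.uT r A₀) ∩ {v | v.1 = i} = {Stmt15.uT r A₀ i} := by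
        ext v
        constructor
        · rintro ⟨⟨j, rfl⟩, hj⟩
          simp only [Set.mem_setOf_eq, Stmt15.uT_fst] at hj
          subst hj; rfl
        · rintro rfl
          exact ⟨⟨i, rfl⟩, Stmt15.uT_fst r A₀ i⟩
      rw [hone, Set.image_singleton]
      exact Set.ncard_singleton _
  · -- cover number exceeds r
    have hkey : ∀ m ∈ {m | ∃ T : Set (Fin n), T.ncard = m ∧ IsCover E T}, r < m := by
      rintro m ⟨T, hTcard, hTcover⟩
      by_contra hle
      push_neg at hle
      have hT0 : (eqv.symm '' T).ncard ≤ r := by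
        rw [Set.ncard_image_of_injective _ eqv.symm.injective, hTcard]
        exact hle
      obtain ⟨A, hAcard, hAdisj⟩ := Stmt15.main_cover r hr _ hT0
      have hmem : (eqv '' Stmt15.edge r A) ∈ E := ⟨_, ⟨A, hAcard, rfl⟩, rfl⟩
      obtain ⟨x, hxe, hxT⟩ := hTcover _ hmem
      obtain ⟨v, hv, rfl⟩ := hxe
      have hvmem : v ∈ Stmt15.edge r A ∩ (eqv.symm '' T) :=
        ⟨hv, ⟨eqv v, hxT, Equiv.symm_apply_apply _ _⟩⟩
      rw [hAdisj] at hvmem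
      exact hvmem
    have hne : Set.Nonempty {m | ∃ T : Set (Fin n), T.ncard = m ∧ IsCover E T} := by
      refine ⟨(Set.univ : Set (Fin n)).ncard, Set.univ, rfl, ?_⟩
      rintro e ⟨e0, ⟨A, hA, rfl⟩, rfl⟩
      have hi0 : (0 : ℕ) < r := by omega
      exact ⟨eqv (Stmt15.vert r A ⟨0, hi0⟩),
        ⟨Stmt15.vert r A ⟨0, hi0⟩, ⟨⟨0, hi0⟩, rfl⟩, rfl⟩, Set.mem_univ _⟩
    exact hkey _ (Nat.sInf_mem hne)
end
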